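/- arXiv:1604.05284 — 4 statements merged into one kernel-verified Lean document; each statement's English description precedes it below -/
import Mathlib

section
/- Let V be a real random variable with lim_{ρ→∞} ρ^α (ln ρ)^{−k} E[W(V/ρ)] = ∫_{−∞}^{∞}(c⁻·1_{x<0} + c⁺·1_{x>0}) W(x) |x|^{−(1+α)} dx for all bounded continuous W : ℝ → ℝ satisfying |W(x)| ≤ C x²/(1+x²), where 0 < α < 2 and k ≥ 0. Let Y be an ℝ^m-valued random vector independent of V with E[|Y|^α] < ∞. Then for every bounded continuous W : ℝ^m → ℝ with |W(x)| ≤ C|x|²/(1+|x|²), lim_{ρ→∞} ρ^α (ln ρ)^{−k} E[W(VY/ρ)] = E[∫₀^∞ (c⁺W(xY) + c⁻W(−xY)) x^{−(1+α)} dx]. -/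
open MeasureTheory ProbabilityTheory Filter Real

section TSVAux

open Set

/-- boundedness of `t^α (1 + log t⁻¹)^k` on `(0,1]`. -/
lemma tsv_aux_log_bound (α k : ℝ) (hα : 0 < α) (hk : 0 ≤ k) :
    ∃ Ck : ℝ, 0 ≤ Ck ∧ ∀ t : ℝ, 0 < t → t ≤ 1 →
      t ^ α * (1 + Real.log t⁻¹) ^ k ≤ Ck := by
  set ε : ℝ := min 1 (α / (2 * (k + 1))) with hε
  have hε0 : 0 < ε := lt_min one_pos (by positivity)
  have hε1 : ε ≤ 1 := min_le_left _ _
  refine ⟨(ε⁻¹) ^ k, by positivity, fun t ht ht1 => ?_⟩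
  set u : ℝ := Real.log t⁻¹ with hu
  have hu0 : 0 ≤ u := Real.log_nonneg (one_le_inv_iff₀.2 ⟨ht, ht1⟩)
  have h1u : (0:ℝ) < 1 + u := by linarith
  -- log(1+u) ≤ ε*u + log ε⁻¹
  have hlog : Real.log (1 + u) ≤ ε * u + Real.log ε⁻¹ := by
    have h2 : Real.log (ε * (1 + u)) ≤ ε * (1 + u) - 1 :=
      Real.log_le_sub_one_of_pos (by positivity)
    have h3 : Real.log (ε * (1 + u)) = Real.log ε + Real.log (1 + u) :=
      Real.log_mul (ne_of_gt hε0) (ne_of_gt h1u)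
    have h4 : Real.log ε⁻¹ = - Real.log ε := Real.log_inv ε
    nlinarith
  -- (1+u)^k ≤ exp (ε k u) * ε⁻¹ ^ k
  have hpow : (1 + u) ^ k ≤ Real.exp (ε * k * u) * (ε⁻¹) ^ k := by
    rw [Real.rpow_def_of_pos h1u, Real.rpow_def_of_pos (show (0:ℝ) < ε⁻¹ by positivity),
      ← Real.exp_add]
    apply Real.exp_le_exp.2
    nlinarith [mul_le_mul_of_nonneg_left hlog hk]
  -- t ^ α = exp (-(α * u))
  have hta : t ^ α = Real.exp (-(α * u)) := by
    rw [Real.rpow_def_of_pos ht, hu, Real.log_inv]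
    ring_nf
  have hεk : ε * k ≤ α / 2 := by
    have : ε ≤ α / (2 * (k + 1)) := min_le_right _ _
    have h2k : (0:ℝ) < 2 * (k + 1) := by positivity
    rw [le_div_iff₀ h2k] at this
    nlinarith
  calc t ^ α * (1 + u) ^ k ≤ Real.exp (-(α * u)) * (Real.exp (ε * k * u) * (ε⁻¹) ^ k) := by
        rw [hta]
        exact mul_le_mul_of_nonneg_left hpow (le_of_lt (Real.exp_pos _))
    _ = Real.exp (ε * k * u - α * u) * (ε⁻¹) ^ k := by rw [← mul_assoc, ← Real.exp_add]; ring_nf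
    _ ≤ 1 * (ε⁻¹) ^ k := by
        apply mul_le_mul_of_nonneg_right _ (by positivity)
        rw [← Real.exp_zero]
        apply Real.exp_le_exp.2
        nlinarith
    _ = (ε⁻¹) ^ k := one_mul _

/-- Integrability of `u x / x^(1+α)` on `(0,∞)` for `u` continuous with quadratic bound. -/
lemma tsv_integrableOn (α : ℝ) (hα₀ : 0 < α) (hα₂ : α < 2) (u : ℝ → ℝ) (huc : Continuous u)
    (Cy : ℝ) (hCy : 0 ≤ Cy) (hb : ∀ x, |u x| ≤ Cy * x ^ 2 / (1 + x ^ 2)) :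
    IntegrableOn (fun x => u x / x ^ (1 + α)) (Set.Ioi 0) := by
  have hmeas : AEStronglyMeasurable (fun x => u x / x ^ (1 + α)) (volume : Measure ℝ) := by
    refine (huc.measurable.div ?_).aestronglyMeasurable
    fun_prop
  have hble : ∀ x : ℝ, |u x| ≤ Cy := by
    intro x
    refine (hb x).trans ?_
    rw [mul_div_assoc]
    have h1 : x ^ 2 / (1 + x ^ 2) ≤ 1 := by
      rw [div_le_one (by positivity)]; nlinarith
    nlinarith
  rw [← Set.Ioc_union_Ioi_eq_Ioi (zero_le_one (α := ℝ))]
  apply IntegrableOn.union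
  · -- on (0,1]
    have hg : IntegrableOn (fun x : ℝ => Cy * x ^ (1 - α)) (Set.Ioc 0 1) := by
      refine Integrable.const_mul ?_ Cy
      have := intervalIntegral.intervalIntegrable_rpow' (a := 0) (b := 1)
        (show (-1:ℝ) < 1 - α by linarith)
      rwa [intervalIntegrable_iff_integrableOn_Ioc_of_le zero_le_one] at this
    refine Integrable.mono' hg hmeas.restrict ?_
    filter_upwards [ae_restrict_mem measurableSet_Ioc] with x hx
    obtain ⟨hx0, hx1⟩ := hx
    have hp : (0:ℝ) < x ^ (1 + α) := Real.rpow_pos_of_pos hx0 _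
    have h1 : ‖u x / x ^ (1 + α)‖ = |u x| / x ^ (1 + α) := by
      rw [Real.norm_eq_abs, abs_div, abs_of_pos hp]
    rw [h1]
    have h2 : |u x| / x ^ (1 + α) ≤ Cy * x ^ 2 / x ^ (1 + α) := by
      have hub : |u x| ≤ Cy * x ^ 2 := (hb x).trans (by
        apply div_le_self (by positivity); nlinarith [sq_nonneg x])
      gcongr
    refine h2.trans (le_of_eq ?_)
    have hx2 : (x:ℝ) ^ 2 = x ^ (2:ℝ) := by
      rw [← Real.rpow_natCast x 2]; norm_num
    rw [mul_div_assoc, hx2, ← Real.rpow_sub hx0]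
    congr 1
    ring
  · -- on (1,∞)
    have hg : IntegrableOn (fun x : ℝ => Cy * x ^ (-(1 + α))) (Set.Ioi 1) := by
      refine Integrable.const_mul ?_ Cy
      exact integrableOn_Ioi_rpow_of_lt (by linarith) one_pos
    refine Integrable.mono' hg hmeas.restrict ?_
    filter_upwards [ae_restrict_mem measurableSet_Ioi] with x hx
    have hx0 : (0:ℝ) < x := lt_trans one_pos hx
    have hp : (0:ℝ) < x ^ (1 + α) := Real.rpow_pos_of_pos hx0 _
    rw [Real.norm_eq_abs, abs_div, abs_of_pos hp, Real.rpow_neg hx0.le, ← div_eq_mul_inv]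
    gcongr
    exact hble x

lemma tsv_integrableOn_Iio (α : ℝ) (hα₀ : 0 < α) (hα₂ : α < 2) (u : ℝ → ℝ) (huc : Continuous u)
    (Cy : ℝ) (hCy : 0 ≤ Cy) (hb : ∀ x, |u x| ≤ Cy * x ^ 2 / (1 + x ^ 2)) :
    IntegrableOn (fun x => u x / |x| ^ (1 + α)) (Set.Iio 0) := by
  have A : MeasurableEmbedding fun x : ℝ => -x :=
    (Homeomorph.neg ℝ).isClosedEmbedding.measurableEmbedding
  have hrestrict : (volume : Measure ℝ).restrict (Set.Iio 0)
      = Measure.map (fun x : ℝ => -x) ((volume : Measure ℝ).restrict (Set.Ioi 0)) := by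
    have h1 : ((Measure.map (fun x : ℝ => -x) volume)).restrict (Set.Iio 0)
        = Measure.map (fun x : ℝ => -x) ((volume : Measure ℝ).restrict ((fun x : ℝ => -x) ⁻¹' (Set.Iio 0))) :=
      Measure.restrict_map measurable_neg measurableSet_Iio
    have h2 : ((fun x : ℝ => -x) ⁻¹' (Set.Iio 0)) = Set.Ioi 0 := by
      ext x; simp
    have h0 : Measure.map (fun x : ℝ => -x) volume = volume :=
      Measure.map_neg_eq_self volume
    conv_lhs => rw [← h0]
    rw [h1, h2]
  unfold IntegrableOn
  rw [hrestrict, A.integrable_map_iff]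
  have key : IntegrableOn (fun x => u (-x) / x ^ (1 + α)) (Set.Ioi 0) := by
    refine tsv_integrableOn α hα₀ hα₂ (fun x => u (-x)) (huc.comp continuous_neg) Cy hCy ?_
    intro x
    have := hb (-x)
    simpa using this
  refine key.congr_fun ?_ measurableSet_Ioi
  intro x hx
  simp only [Function.comp]
  rw [abs_neg, abs_of_pos hx]

/-- Splitting the two-sided limit integral into a one-sided form. -/
lemma tsv_integral_split (α cp cm : ℝ) (hα₀ : 0 < α) (hα₂ : α < 2)
    (u : ℝ → ℝ) (huc : Continuous u)
    (Cy : ℝ) (hCy : 0 ≤ Cy) (hb : ∀ x, |u x| ≤ Cy * x ^ 2 / (1 + x ^ 2)) :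
    (∫ x : ℝ, ((if x < 0 then cm else 0) + (if 0 < x then cp else 0)) * u x / |x| ^ (1 + α))
      = ∫ x in Set.Ioi (0:ℝ), (cp * u x + cm * u (-x)) / x ^ (1 + α) := by
  set h : ℝ → ℝ := fun x =>
    ((if x < 0 then cm else 0) + (if 0 < x then cp else 0)) * u x / |x| ^ (1 + α) with hh
  have hIoiInt : IntegrableOn (fun x => u x / x ^ (1 + α)) (Set.Ioi 0) :=
    tsv_integrableOn α hα₀ hα₂ u huc Cy hCy hb
  have hIoiIntNeg : IntegrableOn (fun x => u (-x) / x ^ (1 + α)) (Set.Ioi 0) :=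
    tsv_integrableOn α hα₀ hα₂ (fun x => u (-x)) (huc.comp continuous_neg) Cy hCy
      (fun x => by simpa using hb (-x))
  have hIioInt : IntegrableOn (fun x => u x / |x| ^ (1 + α)) (Set.Iio 0) :=
    tsv_integrableOn_Iio α hα₀ hα₂ u huc Cy hCy hb
  have hEqIoi : Set.EqOn h (fun x => cp * (u x / x ^ (1 + α))) (Set.Ioi 0) := by
    intro x hx
    have hx0 : (0:ℝ) < x := hx
    simp only [hh, if_neg (not_lt.2 hx0.le), if_pos hx0, abs_of_pos hx0]
    ring
  have hEqIio : Set.EqOn h (fun x => cm * (u x / |x| ^ (1 + α))) (Set.Iio 0) := by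
    intro x hx
    have hx0 : x < 0 := hx
    simp only [hh, if_pos hx0, if_neg (not_lt.2 hx0.le)]
    ring
  have hhIoi : IntegrableOn h (Set.Ioi 0) :=
    IntegrableOn.congr_fun (hIoiInt.const_mul cp) (fun x hx => (hEqIoi hx).symm) measurableSet_Ioi
  have hhIio : IntegrableOn h (Set.Iio 0) :=
    IntegrableOn.congr_fun (hIioInt.const_mul cm) (fun x hx => (hEqIio hx).symm) measurableSet_Iio
  have hInt : Integrable h := by
    rw [← integrableOn_univ, ← Set.Iio_union_Ici (a := (0:ℝ))]
    exact hhIio.union ((integrableOn_Ici_iff_integrableOn_Ioi (f := h) (by simp)).2 hhIoi)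
  have hsplit : (∫ x : ℝ, h x) = (∫ x in Set.Iio 0, h x) + ∫ x in Set.Ioi 0, h x := by
    rw [← integral_Iic_eq_integral_Iio]
    rw [← integral_add_compl measurableSet_Iic hInt, compl_Iic]
  have hneg : (∫ x in Set.Iio 0, h x) = ∫ x in Set.Ioi 0, cm * (u (-x) / x ^ (1 + α)) := by
    have h1 : (∫ x in Set.Ioi (0:ℝ), h (-x)) = ∫ x in Set.Iic (-(0:ℝ)), h x :=
      integral_comp_neg_Ioi 0 h
    rw [neg_zero, integral_Iic_eq_integral_Iio] at h1
    rw [← h1]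
    refine setIntegral_congr_fun measurableSet_Ioi ?_
    intro x hx
    have hx0 : (0:ℝ) < x := hx
    have : (-x) < 0 := by linarith
    simp only [hh, if_pos this, if_neg (not_lt.2 this.le), abs_neg, abs_of_pos hx0]
    ring
  have hpos : (∫ x in Set.Ioi (0:ℝ), h x) = ∫ x in Set.Ioi 0, cp * (u x / x ^ (1 + α)) :=
    setIntegral_congr_fun measurableSet_Ioi hEqIoi
  rw [hsplit, hneg, hpos]
  rw [← integral_add (hIoiIntNeg.const_mul cm) (hIoiInt.const_mul cp)]
  refine setIntegral_congr_fun measurableSet_Ioi ?_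
  intro x hx
  simp only
  ring

end TSVAux

set_option maxHeartbeats 2000000 in
theorem tail_scalar_times_vector
    {Ω : Type*} [MeasurableSpace Ω] (μ : Measure Ω) [IsProbabilityMeasure μ]
    (m : ℕ) (V : Ω → ℝ) (Y : Ω → EuclideanSpace ℝ (Fin m))
    (hV : Measurable V) (hY : Measurable Y) (hind : IndepFun V Y μ)
    (α k cp cm : ℝ) (hα₀ : 0 < α) (hα₂ : α < 2) (hk : 0 ≤ k)
    (hcp : 0 ≤ cp) (hcm : 0 ≤ cm)
    (hmom : Integrable (fun ω => ‖Y ω‖ ^ α) μ)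
    (hVtail : ∀ W : ℝ → ℝ, Continuous W →
      (∃ C : ℝ, ∀ x, |W x| ≤ C * x ^ 2 / (1 + x ^ 2)) →
      Tendsto (fun ρ : ℝ => ρ ^ α * (Real.log ρ) ^ (-k) * ∫ ω, W (V ω / ρ) ∂μ)
        atTop (nhds (∫ x : ℝ,
          ((if x < 0 then cm else 0) + (if 0 < x then cp else 0)) * W x / |x| ^ (1 + α)))) :
    ∀ W : EuclideanSpace ℝ (Fin m) → ℝ, Continuous W →
      (∃ C : ℝ, ∀ x, |W x| ≤ C * ‖x‖ ^ 2 / (1 + ‖x‖ ^ 2)) →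
      Tendsto (fun ρ : ℝ => ρ ^ α * (Real.log ρ) ^ (-k) *
          ∫ ω, W (ρ⁻¹ • (V ω • Y ω)) ∂μ) atTop
        (nhds (∫ ω, (∫ x in Set.Ioi (0:ℝ),
          (cp * W (x • Y ω) + cm * W ((-x) • Y ω)) / x ^ (1 + α)) ∂μ)) := by
  intro W hWc hWb
  obtain ⟨C₀, hC₀⟩ := hWb
  set Cw : ℝ := max C₀ 0 with hCwdef
  have hCw : 0 ≤ Cw := le_max_right _ _
  have hW : ∀ z, |W z| ≤ Cw * ‖z‖ ^ 2 / (1 + ‖z‖ ^ 2) := by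
    intro z
    refine (hC₀ z).trans ?_
    gcongr
    exact le_max_left _ _
  have hWle : ∀ z, |W z| ≤ Cw := by
    intro z
    refine (hW z).trans ?_
    rw [mul_div_assoc]
    have h1 : ‖z‖ ^ 2 / (1 + ‖z‖ ^ 2) ≤ 1 := by
      rw [div_le_one (by positivity)]; nlinarith [sq_nonneg ‖z‖]
    nlinarith
  have hW00 : W 0 = 0 := by
    have h := hW 0
    simp only [norm_zero] at h
    norm_num at h
    exact h
  -- the scalar test function W₀
  set W₀ : ℝ → ℝ := fun x => x ^ 2 / (1 + x ^ 2) with hW₀def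
  have hW₀c : Continuous W₀ :=
    Continuous.div (continuous_pow 2) (continuous_const.add (continuous_pow 2))
      (fun x => by positivity)
  have hW₀nonneg : ∀ x, 0 ≤ W₀ x := fun x => by positivity
  have hW₀le1 : ∀ x, W₀ x ≤ 1 := fun x => by
    rw [hW₀def, div_le_one (by positivity)]; nlinarith [sq_nonneg x]
  have hW₀eq : ∀ a b : ℝ, a ^ 2 = b ^ 2 → W₀ a = W₀ b := by
    intro a b h; simp only [hW₀def, h]
  have h0 := hVtail W₀ hW₀c ⟨1, fun x => by
    rw [abs_of_nonneg (hW₀nonneg x), one_mul]⟩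
  set ℓ0 : ℝ := ∫ x : ℝ,
      ((if x < 0 then cm else 0) + (if 0 < x then cp else 0)) * W₀ x / |x| ^ (1 + α) with hℓ0
  have hev : ∀ᶠ ρ in atTop, ρ ^ α * Real.log ρ ^ (-k) * (∫ ω, W₀ (V ω / ρ) ∂μ) ≤ ℓ0 + 1 :=
    h0.eventually_le_const (lt_add_one _)
  obtain ⟨ρ₀', hρ₀'⟩ := eventually_atTop.1 hev
  set ρ₀ : ℝ := max ρ₀' 3 with hρ₀def
  have hρ₀3 : (3:ℝ) ≤ ρ₀ := le_max_right _ _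
  have hρ₀pos : (0:ℝ) < ρ₀ := by linarith
  set L : ℝ := max (ℓ0 + 1) 0 with hLdef
  have hL0 : 0 ≤ L := le_max_right _ _
  obtain ⟨Ck, hCk0, hCk⟩ := tsv_aux_log_bound α k hα₀ hk
  set K : ℝ := Cw * ρ₀ ^ α + Cw * L + Cw * L * Ck with hKdef
  have hρ₀α : 0 ≤ ρ₀ ^ α := Real.rpow_nonneg hρ₀pos.le α
  have hK0 : 0 ≤ K := by
    have := mul_nonneg hCw hρ₀α
    have := mul_nonneg hCw hL0
    have := mul_nonneg (mul_nonneg hCw hL0) hCk0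
    rw [hKdef]; linarith
  -- helper: bounded measurable implies integrable
  have hIntBdd : ∀ (g : Ω → ℝ) (c : ℝ), Measurable g → (∀ ω, |g ω| ≤ c) → Integrable g μ := by
    intro g c hg hb
    exact (integrable_const c).mono' hg.aestronglyMeasurable
      (Filter.Eventually.of_forall (fun ω => by rw [Real.norm_eq_abs]; exact hb ω))
  -- log ≥ 1 from ≥ 3
  have hlog1 : ∀ s : ℝ, (3:ℝ) ≤ s → 1 ≤ Real.log s := by
    intro s hs
    rw [Real.le_log_iff_exp_le (by linarith)]
    calc Real.exp 1 ≤ 2.7182818286 := Real.exp_one_lt_d9.le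
      _ ≤ s := by linarith
  -- the scalar tail integral A and its bounds
  have hAmeas : ∀ s : ℝ, Measurable fun ω => W₀ (V ω / s) :=
    fun s => hW₀c.measurable.comp (hV.div_const s)
  have hAint : ∀ s : ℝ, Integrable (fun ω => W₀ (V ω / s)) μ := by
    intro s
    exact hIntBdd _ 1 (hAmeas s) (fun ω => by
      rw [abs_of_nonneg (hW₀nonneg _)]; exact hW₀le1 _)
  have hA1 : ∀ s : ℝ, (∫ ω, W₀ (V ω / s) ∂μ) ≤ 1 := by
    intro s
    calc (∫ ω, W₀ (V ω / s) ∂μ) ≤ ∫ _, (1:ℝ) ∂μ :=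
          integral_mono (hAint s) (integrable_const 1) (fun ω => hW₀le1 _)
      _ = 1 := by simp
  have hA0 : ∀ s : ℝ, 0 ≤ ∫ ω, W₀ (V ω / s) ∂μ :=
    fun s => integral_nonneg (fun ω => hW₀nonneg _)
  have hAle : ∀ s : ℝ, ρ₀ ≤ s → (∫ ω, W₀ (V ω / s) ∂μ) ≤ L * s ^ (-α) * Real.log s ^ k := by
    intro s hs
    have hs3 : (3:ℝ) ≤ s := le_trans hρ₀3 hs
    have hs0 : (0:ℝ) < s := by linarith
    have hlog : 1 ≤ Real.log s := hlog1 s hs3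
    have hlpos : 0 < Real.log s := by linarith
    have hXpos : 0 < s ^ α * Real.log s ^ (-k) :=
      mul_pos (Real.rpow_pos_of_pos hs0 _) (Real.rpow_pos_of_pos hlpos _)
    have hb := (hρ₀' s (le_trans (le_max_left _ _) hs)).trans (le_max_left (ℓ0 + 1) 0)
    calc (∫ ω, W₀ (V ω / s) ∂μ) ≤ L / (s ^ α * Real.log s ^ (-k)) := by
          rw [le_div_iff₀ hXpos]
          calc (∫ ω, W₀ (V ω / s) ∂μ) * (s ^ α * Real.log s ^ (-k))
              = s ^ α * Real.log s ^ (-k) * (∫ ω, W₀ (V ω / s) ∂μ) := by ring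
            _ ≤ L := hb
      _ = L * s ^ (-α) * Real.log s ^ k := by
          rw [Real.rpow_neg hs0.le, Real.rpow_neg hlpos.le, div_eq_mul_inv, mul_inv, inv_inv]
          ring
  -- key uniform bound
  have hKey : ∀ ρ : ℝ, ρ₀ ≤ ρ → ∀ y : EuclideanSpace ℝ (Fin m),
      ρ ^ α * Real.log ρ ^ (-k) * |∫ ω, W ((V ω / ρ) • y) ∂μ| ≤ K * (1 + ‖y‖ ^ α) := by
    intro ρ hρ y
    have hρ3 : (3:ℝ) ≤ ρ := le_trans hρ₀3 hρ
    have hρ0 : (0:ℝ) < ρ := by linarith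
    have hlogρ : 1 ≤ Real.log ρ := hlog1 ρ hρ3
    have hlogρ0 : 0 < Real.log ρ := by linarith
    have hcρ0 : 0 ≤ ρ ^ α * Real.log ρ ^ (-k) :=
      mul_nonneg (Real.rpow_nonneg hρ0.le _) (Real.rpow_nonneg hlogρ0.le _)
    set t : ℝ := ‖y‖ with htdef
    have ht0 : 0 ≤ t := norm_nonneg y
    have htα : 0 ≤ t ^ α := Real.rpow_nonneg ht0 _
    have hRHS0 : 0 ≤ K * (1 + t ^ α) := mul_nonneg hK0 (by linarith)
    have hIntW : Integrable (fun ω => W ((V ω / ρ) • y)) μ :=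
      hIntBdd _ Cw (hWc.measurable.comp ((hV.div_const ρ).smul_const y)) (fun ω => hWle _)
    have hIntWabs : Integrable (fun ω => |W ((V ω / ρ) • y)|) μ :=
      hIntW.abs
    rcases eq_or_lt_of_le ht0 with hy0 | hy
    · -- ‖y‖ = 0
      have hy' : y = 0 := norm_eq_zero.1 hy0.symm
      subst hy'
      simp only [smul_zero, hW00, integral_const, smul_eq_mul, mul_zero, mul_one, abs_zero]
      simpa using hRHS0
    · -- ‖y‖ > 0
      set s : ℝ := ρ / t with hsdef
      have hs0 : 0 < s := div_pos hρ0 hy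
      have hpt : ∀ ω, |W ((V ω / ρ) • y)| ≤ Cw * W₀ (V ω / s) := by
        intro ω
        have h1 := hW ((V ω / ρ) • y)
        rw [norm_smul, Real.norm_eq_abs] at h1
        have h2 : W₀ (|V ω / ρ| * t) = W₀ (V ω / s) := by
          refine hW₀eq _ _ ?_
          rw [mul_pow, sq_abs, hsdef]
          rw [div_pow, div_pow, div_pow]
          rw [div_div_eq_mul_div]
          ring
        calc |W ((V ω / ρ) • y)| ≤ Cw * (|V ω / ρ| * t) ^ 2 / (1 + (|V ω / ρ| * t) ^ 2) := h1
          _ = Cw * W₀ (|V ω / ρ| * t) := by rw [hW₀def]; ring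
          _ = Cw * W₀ (V ω / s) := by rw [h2]
      have hIA : |∫ ω, W ((V ω / ρ) • y) ∂μ| ≤ Cw * ∫ ω, W₀ (V ω / s) ∂μ := by
        calc |∫ ω, W ((V ω / ρ) • y) ∂μ| ≤ ∫ ω, |W ((V ω / ρ) • y)| ∂μ := by
              simpa [Real.norm_eq_abs] using
                norm_integral_le_integral_norm (fun ω => W ((V ω / ρ) • y)) (μ := μ)
          _ ≤ ∫ ω, Cw * W₀ (V ω / s) ∂μ :=
              integral_mono hIntWabs ((hAint s).const_mul Cw) hpt
          _ = Cw * ∫ ω, W₀ (V ω / s) ∂μ := integral_const_mul _ _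
      rcases lt_or_ge s ρ₀ with hcase | hcase
      · -- big ‖y‖
        have hρle : ρ ≤ ρ₀ * t := by
          rw [hsdef, div_lt_iff₀ hy] at hcase
          linarith
        have hIC : |∫ ω, W ((V ω / ρ) • y) ∂μ| ≤ Cw :=
          hIA.trans (by nlinarith [hA1 s, hA0 s])
        have hlk : Real.log ρ ^ (-k) ≤ 1 :=
          Real.rpow_le_one_of_one_le_of_nonpos hlogρ (neg_nonpos.2 hk)
        calc ρ ^ α * Real.log ρ ^ (-k) * |∫ ω, W ((V ω / ρ) • y) ∂μ|
            ≤ ρ ^ α * 1 * Cw := by gcongr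
          _ = Cw * ρ ^ α := by ring
          _ ≤ Cw * (ρ₀ * t) ^ α := by gcongr
          _ = Cw * ρ₀ ^ α * t ^ α := by
              rw [Real.mul_rpow hρ₀pos.le ht0]; ring
          _ ≤ K * (1 + t ^ α) := by
              rw [hKdef]
              nlinarith [mul_nonneg (mul_nonneg hCw hL0) hCk0, mul_nonneg hCw hL0,
                mul_nonneg (mul_nonneg hCw hρ₀α) htα]
      · -- s ≥ ρ₀
        have hs3 : (3:ℝ) ≤ s := le_trans hρ₀3 hcase
        have hlogs : 1 ≤ Real.log s := hlog1 s hs3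
        have hlogs0 : 0 < Real.log s := by linarith
        have hts : ρ ^ α * s ^ (-α) = t ^ α := by
          rw [Real.rpow_neg hs0.le, ← div_eq_mul_inv, ← Real.div_rpow hρ0.le hs0.le]
          congr 1
          rw [hsdef]
          field_simp
        have hfin : Cw * L * (t ^ α * (Real.log ρ ^ (-k) * Real.log s ^ k)) ≤ K * (1 + t ^ α) := by
          have hinv : Real.log ρ ^ (-k) * Real.log ρ ^ k = 1 := by
            rw [Real.rpow_neg hlogρ0.le]
            field_simp
          rcases le_or_gt 1 t with ht1 | ht1
          · -- t ≥ 1 : ratio ≤ 1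
            have hsleρ : s ≤ ρ := by
              rw [hsdef]
              exact div_le_self hρ0.le ht1
            have hlogle : Real.log s ≤ Real.log ρ := Real.log_le_log hs0 hsleρ
            have hr1 : Real.log s ^ k ≤ Real.log ρ ^ k :=
              Real.rpow_le_rpow hlogs0.le hlogle hk
            have hratio : Real.log ρ ^ (-k) * Real.log s ^ k ≤ 1 := by
              calc Real.log ρ ^ (-k) * Real.log s ^ k
                  ≤ Real.log ρ ^ (-k) * Real.log ρ ^ k := by gcongr
                _ = 1 := hinv
            have h6 : t ^ α * (Real.log ρ ^ (-k) * Real.log s ^ k) ≤ t ^ α := by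
              nlinarith [mul_nonneg (Real.rpow_nonneg hlogρ0.le (-k)) (Real.rpow_nonneg hlogs0.le k)]
            rw [hKdef]
            nlinarith [mul_nonneg hCw hL0, mul_nonneg (mul_nonneg hCw hL0) htα,
              mul_nonneg (mul_nonneg hCw hρ₀α) htα, mul_nonneg (mul_nonneg hCw hL0) hCk0,
              mul_nonneg hCw hρ₀α]
          · -- t < 1
            have hu0 : 0 ≤ Real.log t⁻¹ := Real.log_nonneg (one_le_inv_iff₀.2 ⟨hy, ht1.le⟩)
            have hlogseq : Real.log s = Real.log ρ + Real.log t⁻¹ := by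
              rw [hsdef, Real.log_div hρ0.ne' hy.ne', Real.log_inv]
              ring
            have hls : Real.log s ≤ Real.log ρ * (1 + Real.log t⁻¹) := by
              rw [hlogseq]
              nlinarith
            have hr1 : Real.log s ^ k ≤ Real.log ρ ^ k * (1 + Real.log t⁻¹) ^ k := by
              rw [← Real.mul_rpow hlogρ0.le (by linarith)]
              exact Real.rpow_le_rpow hlogs0.le hls hk
            have hratio : Real.log ρ ^ (-k) * Real.log s ^ k ≤ (1 + Real.log t⁻¹) ^ k := by
              calc Real.log ρ ^ (-k) * Real.log s ^ k
                  ≤ Real.log ρ ^ (-k) * (Real.log ρ ^ k * (1 + Real.log t⁻¹) ^ k) := by gcongr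
                _ = (Real.log ρ ^ (-k) * Real.log ρ ^ k) * (1 + Real.log t⁻¹) ^ k := by ring
                _ = (1 + Real.log t⁻¹) ^ k := by rw [hinv, one_mul]
            have h6 : t ^ α * (Real.log ρ ^ (-k) * Real.log s ^ k) ≤ Ck := by
              calc t ^ α * (Real.log ρ ^ (-k) * Real.log s ^ k)
                  ≤ t ^ α * (1 + Real.log t⁻¹) ^ k := by gcongr
                _ ≤ Ck := hCk t hy ht1.le
            rw [hKdef]
            nlinarith [mul_nonneg hCw hL0, mul_nonneg (mul_nonneg hCw hL0) htα,
              mul_nonneg (mul_nonneg hCw hρ₀α) htα, mul_nonneg hCw hρ₀α,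
              mul_nonneg (mul_nonneg hCw hL0) (mul_nonneg htα
                (mul_nonneg (Real.rpow_nonneg hlogρ0.le (-k)) (Real.rpow_nonneg hlogs0.le k)))]
        calc ρ ^ α * Real.log ρ ^ (-k) * |∫ ω, W ((V ω / ρ) • y) ∂μ|
            ≤ ρ ^ α * Real.log ρ ^ (-k) * (Cw * ∫ ω, W₀ (V ω / s) ∂μ) := by gcongr
          _ ≤ ρ ^ α * Real.log ρ ^ (-k) * (Cw * (L * s ^ (-α) * Real.log s ^ k)) := by
              gcongr
              exact hAle s hcase
          _ = Cw * L * ((ρ ^ α * s ^ (-α)) * (Real.log ρ ^ (-k) * Real.log s ^ k)) := by ring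
          _ = Cw * L * (t ^ α * (Real.log ρ ^ (-k) * Real.log s ^ k)) := by rw [hts]
          _ ≤ K * (1 + t ^ α) := hfin

  -- measures
  set pmY : Measure (EuclideanSpace ℝ (Fin m)) := μ.map Y with hpmYdef
  haveI hpmYP : IsProbabilityMeasure pmY := Measure.isProbabilityMeasure_map hY.aemeasurable
  haveI hνP : IsProbabilityMeasure (μ.map V) := Measure.isProbabilityMeasure_map hV.aemeasurable
  -- the limit function
  set f : EuclideanSpace ℝ (Fin m) → ℝ := fun y =>
    ∫ x in Set.Ioi (0:ℝ), (cp * W (x • y) + cm * W ((-x) • y)) / x ^ (1 + α) with hfdef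
  have hfmeas : AEStronglyMeasurable f pmY := by
    have hg : StronglyMeasurable fun p : EuclideanSpace ℝ (Fin m) × ℝ =>
        (cp * W (p.2 • p.1) + cm * W ((-p.2) • p.1)) / p.2 ^ (1 + α) := by
      apply Measurable.stronglyMeasurable
      refine Measurable.div ?_ ?_
      · exact ((continuous_const.mul (hWc.comp (continuous_snd.smul continuous_fst))).add
          (continuous_const.mul (hWc.comp ((continuous_snd.neg).smul continuous_fst)))).measurable
      · fun_prop
    rw [hfdef]
    exact hg.integral_prod_right'.aestronglyMeasurable
  -- Fubini via independence
  have hjoint : μ.map (fun ω => (V ω, Y ω)) = (μ.map V).prod pmY :=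
    (indepFun_iff_map_prod_eq_prod_map_map hV.aemeasurable hY.aemeasurable).1 hind
  have heq : ∀ ρ : ℝ, (∫ ω, W (ρ⁻¹ • (V ω • Y ω)) ∂μ)
      = ∫ y, (∫ ω, W ((V ω / ρ) • y) ∂μ) ∂pmY := by
    intro ρ
    have hΦc : Continuous fun p : ℝ × EuclideanSpace ℝ (Fin m) => W ((p.1 / ρ) • p.2) :=
      hWc.comp ((continuous_fst.div_const ρ).smul continuous_snd)
    have hΦint : Integrable (fun p : ℝ × EuclideanSpace ℝ (Fin m) => W ((p.1 / ρ) • p.2))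
        ((μ.map V).prod pmY) :=
      (integrable_const Cw).mono' hΦc.aestronglyMeasurable
        (Filter.Eventually.of_forall fun p => by rw [Real.norm_eq_abs]; exact hWle _)
    have e1 : (∫ ω, W (ρ⁻¹ • (V ω • Y ω)) ∂μ)
        = ∫ ω, (fun p : ℝ × EuclideanSpace ℝ (Fin m) => W ((p.1 / ρ) • p.2)) (V ω, Y ω) ∂μ := by
      refine integral_congr_ae (Filter.Eventually.of_forall fun ω => ?_)
      simp only [smul_smul]
      rw [div_eq_mul_inv, mul_comm]
    rw [e1, ← integral_map (hV.prodMk hY).aemeasurable hΦc.aestronglyMeasurable, hjoint,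
      integral_prod_symm _ hΦint]
    refine integral_congr_ae (Filter.Eventually.of_forall fun y => ?_)
    exact integral_map hV.aemeasurable
      ((hWc.comp ((continuous_id.div_const ρ).smul continuous_const)).aestronglyMeasurable)
  -- pointwise limits
  have hlim : ∀ y : EuclideanSpace ℝ (Fin m),
      Tendsto (fun ρ : ℝ => ρ ^ α * Real.log ρ ^ (-k) * ∫ ω, W ((V ω / ρ) • y) ∂μ)
        atTop (nhds (f y)) := by
    intro y
    have hcont : Continuous fun x : ℝ => W (x • y) :=
      hWc.comp (continuous_id.smul continuous_const)
    have hCy0 : 0 ≤ Cw * (1 + ‖y‖ ^ 2) := by positivity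
    have hbnd : ∀ x : ℝ, |W (x • y)| ≤ Cw * (1 + ‖y‖ ^ 2) * x ^ 2 / (1 + x ^ 2) := by
      intro x
      have h1 := hW (x • y)
      rw [norm_smul, Real.norm_eq_abs] at h1
      refine h1.trans ?_
      rw [div_le_div_iff₀ (by positivity) (by positivity)]
      have ha : (0:ℝ) ≤ x ^ 2 := sq_nonneg x
      have hb : (0:ℝ) ≤ ‖y‖ ^ 2 := sq_nonneg _
      have habs : (|x| * ‖y‖) ^ 2 = x ^ 2 * ‖y‖ ^ 2 := by rw [mul_pow, sq_abs]
      rw [habs]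
      nlinarith [mul_nonneg hCw ha, mul_nonneg (mul_nonneg hCw ha) (mul_nonneg ha hb)]
    have h2 := hVtail (fun x => W (x • y)) hcont ⟨Cw * (1 + ‖y‖ ^ 2), hbnd⟩
    have h3 := tsv_integral_split α cp cm hα₀ hα₂ (fun x => W (x • y)) hcont
      (Cw * (1 + ‖y‖ ^ 2)) hCy0 hbnd
    rw [h3] at h2
    exact h2
  -- measurability of the approximants
  have hFmeas : ∀ ρ : ℝ, AEStronglyMeasurable
      (fun y : EuclideanSpace ℝ (Fin m) =>
        ρ ^ α * Real.log ρ ^ (-k) * ∫ ω, W ((V ω / ρ) • y) ∂μ) pmY := by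
    intro ρ
    have hcont : Continuous fun y : EuclideanSpace ℝ (Fin m) =>
        ∫ ω, W ((V ω / ρ) • y) ∂μ := by
      refine continuous_of_dominated ?_ ?_ (integrable_const Cw) ?_
      · intro y
        exact (hWc.measurable.comp ((hV.div_const ρ).smul_const y)).aestronglyMeasurable
      · intro y
        exact Filter.Eventually.of_forall fun ω => by rw [Real.norm_eq_abs]; exact hWle _
      · exact Filter.Eventually.of_forall fun ω => hWc.comp (continuous_const_smul _)
    exact (continuous_const.mul hcont).aestronglyMeasurable
  -- integrability of the dominating function
  have hboundInt : Integrable (fun y : EuclideanSpace ℝ (Fin m) => K * (1 + ‖y‖ ^ α)) pmY := by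
    have h1 : Integrable (fun y : EuclideanSpace ℝ (Fin m) => ‖y‖ ^ α) pmY := by
      rw [hpmYdef]
      refine (integrable_map_measure ?_ hY.aemeasurable).2 ?_
      · exact (by fun_prop : Measurable fun y : EuclideanSpace ℝ (Fin m) =>
          ‖y‖ ^ α).aestronglyMeasurable
      · exact hmom
    exact ((integrable_const 1).add h1).const_mul K
  -- dominated convergence
  have hmain : Tendsto (fun ρ : ℝ => ∫ y,
      (ρ ^ α * Real.log ρ ^ (-k) * ∫ ω, W ((V ω / ρ) • y) ∂μ) ∂pmY) atTop
      (nhds (∫ y, f y ∂pmY)) := by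
    refine tendsto_integral_filter_of_dominated_convergence (fun y => K * (1 + ‖y‖ ^ α))
      (Filter.Eventually.of_forall hFmeas) ?_ hboundInt
      (Filter.Eventually.of_forall hlim)
    rw [eventually_atTop]
    refine ⟨ρ₀, fun ρ hρ => Filter.Eventually.of_forall fun y => ?_⟩
    have hρ3 : (3:ℝ) ≤ ρ := le_trans hρ₀3 hρ
    have hρ0 : (0:ℝ) < ρ := by linarith
    have hlogρ0 : 0 < Real.log ρ := by linarith [hlog1 ρ hρ3]
    have hcρ0 : 0 ≤ ρ ^ α * Real.log ρ ^ (-k) :=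
      mul_nonneg (Real.rpow_nonneg hρ0.le _) (Real.rpow_nonneg hlogρ0.le _)
    rw [Real.norm_eq_abs, abs_mul, abs_of_nonneg hcρ0]
    exact hKey ρ hρ y
  -- assemble
  have hfun : (fun ρ : ℝ => ρ ^ α * Real.log ρ ^ (-k) * ∫ ω, W (ρ⁻¹ • (V ω • Y ω)) ∂μ)
      = fun ρ : ℝ => ∫ y,
        (ρ ^ α * Real.log ρ ^ (-k) * ∫ ω, W ((V ω / ρ) • y) ∂μ) ∂pmY := by
    funext ρ
    rw [heq ρ, ← integral_const_mul]
  have htgt : (∫ y, f y ∂pmY) = ∫ ω, f (Y ω) ∂μ := by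
    rw [hpmYdef]
    exact integral_map hY.aemeasurable (hpmYdef ▸ hfmeas)
  have hgoalval : (∫ ω, (∫ x in Set.Ioi (0:ℝ),
      (cp * W (x • Y ω) + cm * W ((-x) • Y ω)) / x ^ (1 + α)) ∂μ) = ∫ y, f y ∂pmY := by
    rw [htgt, hfdef]
  rw [hfun, hgoalval]
  exact hmain
end

section
/- Let V be a real random variable satisfying lim_{ρ→∞} ρ^α (ln ρ)^{−k} E[W(V y/ρ)] = ∫₀^∞ (c⁺W(xy) + c⁻W(−xy)) x^{−(1+α)} dx for each fixed y ∈ ℝ^m and each W in the class 𝒲 of bounded continuous functions with |W(x)| ≤ C|x|²/(1+|x|²), with the convergence uniform on bounded sets of y, 0 < α < 2, k ≥ 0. Then for all ρ ≥ 3 with ln ρ ≥ 1 there is a constant C' such that ρ^α (ln ρ)^{−k} E[W(V y/ρ)] ≤ C' max(1, |y|^α) for all y ∈ ℝ^m. -/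
open MeasureTheory Filter Real

theorem domination_estimate_scalar_vector
    {Ω : Type*} [MeasurableSpace Ω] (μ : Measure Ω) [IsProbabilityMeasure μ]
    (m : ℕ) (V : Ω → ℝ) (hV : Measurable V)
    (α k cp cm : ℝ) (hα₀ : 0 < α) (hα₂ : α < 2) (hk : 0 ≤ k)
    (hcp : 0 ≤ cp) (hcm : 0 ≤ cm)
    (W : EuclideanSpace ℝ (Fin m) → ℝ) (hWc : Continuous W)
    (C : ℝ) (hWb : ∀ x, |W x| ≤ C * ‖x‖ ^ 2 / (1 + ‖x‖ ^ 2))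
    (hpt : ∀ y : EuclideanSpace ℝ (Fin m),
      Tendsto (fun ρ : ℝ => ρ ^ α * (Real.log ρ) ^ (-k) *
          ∫ ω, W ((V ω / ρ) • y) ∂μ) atTop
        (nhds (∫ x in Set.Ioi (0:ℝ),
          (cp * W (x • y) + cm * W ((-x) • y)) / x ^ (1 + α))))
    (hunif : ∀ R > (0:ℝ), TendstoUniformlyOn
      (fun ρ (y : EuclideanSpace ℝ (Fin m)) => ρ ^ α * (Real.log ρ) ^ (-k) *
        ∫ ω, W ((V ω / ρ) • y) ∂μ)
      (fun y => ∫ x in Set.Ioi (0:ℝ),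
        (cp * W (x • y) + cm * W ((-x) • y)) / x ^ (1 + α))
      atTop (Metric.closedBall 0 R)) :
    ∃ C' : ℝ, ∀ ρ : ℝ, 3 ≤ ρ → 1 ≤ Real.log ρ →
      ∀ y : EuclideanSpace ℝ (Fin m),
        ρ ^ α * (Real.log ρ) ^ (-k) * ∫ ω, W ((V ω / ρ) • y) ∂μ
          ≤ C' * max 1 (‖y‖ ^ α) := by
  classical
  set C₀ : ℝ := max C 0 with hC₀def
  have hC₀0 : (0:ℝ) ≤ C₀ := le_max_right _ _
  have hWC₀ : ∀ x, |W x| ≤ C₀ := by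
    intro x
    refine (hWb x).trans ?_
    rcases le_or_gt C 0 with hC | hC
    · have h1 : C * ‖x‖ ^ 2 / (1 + ‖x‖ ^ 2) ≤ 0 :=
        div_nonpos_of_nonpos_of_nonneg
          (mul_nonpos_of_nonpos_of_nonneg hC (sq_nonneg _)) (by positivity)
      linarith
    · have h1 : C * ‖x‖ ^ 2 / (1 + ‖x‖ ^ 2) ≤ C := by
        rw [div_le_iff₀ (by positivity)]
        nlinarith [sq_nonneg ‖x‖]
      exact h1.trans (le_max_left _ _)
  -- bound on the integral, uniform in everything
  have hint : ∀ (ρ : ℝ) (y : EuclideanSpace ℝ (Fin m)),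
      |∫ ω, W ((V ω / ρ) • y) ∂μ| ≤ C₀ := by
    intro ρ y
    have := norm_integral_le_of_norm_le_const (μ := μ)
      (f := fun ω => W ((V ω / ρ) • y)) (C := C₀) ?_
    · simpa [Real.norm_eq_abs] using this
    · filter_upwards with ω
      simpa [Real.norm_eq_abs] using hWC₀ ((V ω / ρ) • y)
  -- uniform convergence on the unit ball
  obtain ⟨a, ha⟩ := eventually_atTop.mp
    ((Metric.tendstoUniformlyOn_iff.mp (hunif 1 one_pos)) 1 one_pos)
  set ρ₁ : ℝ := max a 3 with hρ₁def
  have hρ₁3 : (3:ℝ) ≤ ρ₁ := le_max_right _ _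
  have hρ₁pos : (0:ℝ) < ρ₁ := by linarith
  have hlog3 : (1:ℝ) ≤ Real.log 3 := by
    rw [Real.le_log_iff_exp_le (by norm_num)]
    have := Real.exp_one_lt_d9
    linarith
  have hlogρ₁ : (1:ℝ) ≤ Real.log ρ₁ :=
    hlog3.trans (Real.log_le_log (by norm_num) hρ₁3)
  have hpow_le_one : ∀ b : ℝ, 1 ≤ b → b ^ (-k) ≤ 1 := fun b hb =>
    Real.rpow_le_one_of_one_le_of_nonpos hb (neg_nonpos.mpr hk)
  set M : ℝ := C₀ * ρ₁ ^ α + 2 with hMdef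
  have hM0 : (0:ℝ) ≤ M := by
    have : (0:ℝ) ≤ C₀ * ρ₁ ^ α :=
      mul_nonneg hC₀0 (Real.rpow_pos_of_pos hρ₁pos α).le
    linarith
  -- bound for f ρ' y for ρ' ≥ ρ₁ and ‖y‖ ≤ 1
  have hball : ∀ ρ' : ℝ, ρ₁ ≤ ρ' → ∀ y : EuclideanSpace ℝ (Fin m), ‖y‖ ≤ 1 →
      ρ' ^ α * (Real.log ρ') ^ (-k) * ∫ ω, W ((V ω / ρ') • y) ∂μ ≤ M := by
    intro ρ' hρ' y hy
    have hymem : y ∈ Metric.closedBall (0 : EuclideanSpace ℝ (Fin m)) 1 := by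
      simpa [Metric.mem_closedBall] using hy
    have h1 := ha ρ' (le_trans (le_max_left a 3) hρ') y hymem
    have h2 := ha ρ₁ (le_max_left a 3) y hymem
    rw [Real.dist_eq, abs_sub_comm] at h1 h2
    have h1' := (abs_lt.mp h1).2
    have h2' := (abs_lt.mp h2).1
    -- bound on f ρ₁ y
    have hfρ₁ : ρ₁ ^ α * (Real.log ρ₁) ^ (-k) * ∫ ω, W ((V ω / ρ₁) • y) ∂μ
        ≤ C₀ * ρ₁ ^ α := by
      have hI := (abs_le.mp (hint ρ₁ y)).2
      have hlp : (0:ℝ) < (Real.log ρ₁) ^ (-k) :=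
        Real.rpow_pos_of_pos (by linarith) _
      have hrp : (0:ℝ) < ρ₁ ^ α := Real.rpow_pos_of_pos hρ₁pos α
      calc ρ₁ ^ α * (Real.log ρ₁) ^ (-k) * ∫ ω, W ((V ω / ρ₁) • y) ∂μ
          ≤ ρ₁ ^ α * (Real.log ρ₁) ^ (-k) * C₀ := by
            exact mul_le_mul_of_nonneg_left hI (by positivity)
        _ ≤ ρ₁ ^ α * 1 * C₀ := by
            have := hpow_le_one _ hlogρ₁
            have : ρ₁ ^ α * (Real.log ρ₁) ^ (-k) ≤ ρ₁ ^ α * 1 :=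
              mul_le_mul_of_nonneg_left (hpow_le_one _ hlogρ₁) hrp.le
            exact mul_le_mul_of_nonneg_right this hC₀0
        _ = C₀ * ρ₁ ^ α := by ring
    linarith
  refine ⟨M, ?_⟩
  intro ρ hρ3 hlogρ y
  have hρpos : (0:ℝ) < ρ := by linarith
  have hmax1 : (1:ℝ) ≤ max 1 (‖y‖ ^ α) := le_max_left _ _
  have hlogpos : (0:ℝ) < Real.log ρ := by linarith
  have hlpk : (0:ℝ) < (Real.log ρ) ^ (-k) := Real.rpow_pos_of_pos hlogpos _
  have hrpk : (0:ℝ) < ρ ^ α := Real.rpow_pos_of_pos hρpos α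
  rcases le_or_gt ‖y‖ 1 with hy | hy
  · -- small y: split on ρ vs ρ₁
    have hgoal : ρ ^ α * (Real.log ρ) ^ (-k) * ∫ ω, W ((V ω / ρ) • y) ∂μ ≤ M := by
      rcases le_or_gt ρ₁ ρ with h | h
      · exact hball ρ h y hy
      · have hI := (abs_le.mp (hint ρ y)).2
        calc ρ ^ α * (Real.log ρ) ^ (-k) * ∫ ω, W ((V ω / ρ) • y) ∂μ
            ≤ ρ ^ α * ((Real.log ρ) ^ (-k) * C₀) := by
              rw [mul_assoc]
              exact mul_le_mul_of_nonneg_left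
                (mul_le_mul_of_nonneg_left hI hlpk.le) hrpk.le
          _ ≤ ρ ^ α * C₀ := by
              refine mul_le_mul_of_nonneg_left ?_ hrpk.le
              calc (Real.log ρ) ^ (-k) * C₀ ≤ 1 * C₀ :=
                    mul_le_mul_of_nonneg_right (hpow_le_one _ hlogρ) hC₀0
                _ = C₀ := one_mul _
          _ ≤ ρ₁ ^ α * C₀ :=
              mul_le_mul_of_nonneg_right
                (Real.rpow_le_rpow hρpos.le h.le hα₀.le) hC₀0
          _ ≤ M := by rw [hMdef]; linarith [mul_comm C₀ (ρ₁ ^ α)]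
    calc ρ ^ α * (Real.log ρ) ^ (-k) * ∫ ω, W ((V ω / ρ) • y) ∂μ ≤ M := hgoal
      _ = M * 1 := (mul_one M).symm
      _ ≤ M * max 1 (‖y‖ ^ α) := mul_le_mul_of_nonneg_left hmax1 hM0
  · -- large y: rescale
    set r : ℝ := ‖y‖ with hrdef
    have hr1 : (1:ℝ) < r := hy
    have hrpos : (0:ℝ) < r := by linarith
    have hrne : r ≠ 0 := ne_of_gt hrpos
    set u : EuclideanSpace ℝ (Fin m) := r⁻¹ • y with hudef
    have hu1 : ‖u‖ = 1 := by
      rw [hudef, norm_smul, norm_inv, Real.norm_eq_abs, abs_of_pos hrpos,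
        ← hrdef, inv_mul_cancel₀ hrne]
    set ρ' : ℝ := ρ / r with hρ'def
    have hρ'pos : (0:ℝ) < ρ' := div_pos hρpos hrpos
    have hrw : ∀ ω, ((V ω / ρ) • y) = ((V ω / ρ') • u) := by
      intro ω
      rw [hudef, smul_smul]
      congr 1
      rw [hρ'def]
      field_simp
    have hIeq : (∫ ω, W ((V ω / ρ) • y) ∂μ) = ∫ ω, W ((V ω / ρ') • u) ∂μ := by
      exact integral_congr_ae (Filter.Eventually.of_forall fun ω => congrArg W (hrw ω))
    set I : ℝ := ∫ ω, W ((V ω / ρ') • u) ∂μ with hIdef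
    rw [hIeq]
    have hρeq : ρ ^ α = r ^ α * ρ' ^ α := by
      rw [← Real.mul_rpow hrpos.le hρ'pos.le]
      congr 1
      rw [hρ'def]
      field_simp
    have hrα : r ^ α ≤ max 1 (‖y‖ ^ α) := le_max_right _ _
    have hrαpos : (0:ℝ) < r ^ α := Real.rpow_pos_of_pos hrpos α
    rcases le_or_gt I 0 with hI0 | hI0
    · have hle : ρ ^ α * (Real.log ρ) ^ (-k) * I ≤ 0 :=
        mul_nonpos_of_nonneg_of_nonpos (by positivity) hI0
      exact hle.trans (by positivity)
    · rcases le_or_gt ρ₁ ρ' with h | h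
      · -- use the ball bound at ρ', u
        have hρ'le : ρ' ≤ ρ := by
          rw [hρ'def]
          exact div_le_self hρpos.le hr1.le
        have hlogρ' : (1:ℝ) ≤ Real.log ρ' := hlogρ₁.trans
          (Real.log_le_log hρ₁pos h)
        have hloble : (Real.log ρ) ^ (-k) ≤ (Real.log ρ') ^ (-k) :=
          Real.rpow_le_rpow_of_nonpos (by linarith)
            (Real.log_le_log (by linarith) hρ'le) (neg_nonpos.mpr hk)
        have hb := hball ρ' h u (le_of_eq hu1)
        rw [← hIdef] at hb
        calc ρ ^ α * (Real.log ρ) ^ (-k) * I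
            = r ^ α * (ρ' ^ α * ((Real.log ρ) ^ (-k) * I)) := by
              rw [hρeq]; ring
          _ ≤ r ^ α * (ρ' ^ α * ((Real.log ρ') ^ (-k) * I)) := by
              refine mul_le_mul_of_nonneg_left (mul_le_mul_of_nonneg_left
                (mul_le_mul_of_nonneg_right hloble hI0.le)
                (Real.rpow_pos_of_pos hρ'pos α).le) hrαpos.le
          _ = r ^ α * (ρ' ^ α * (Real.log ρ') ^ (-k) * I) := by ring
          _ ≤ r ^ α * M := mul_le_mul_of_nonneg_left hb hrαpos.le
          _ = M * r ^ α := mul_comm _ _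
          _ ≤ M * max 1 (‖y‖ ^ α) := mul_le_mul_of_nonneg_left hrα hM0
      · -- ρ' small: crude bound
        have hI := (abs_le.mp (hint ρ' u)).2
        rw [← hIdef] at hI
        calc ρ ^ α * (Real.log ρ) ^ (-k) * I
            = r ^ α * (ρ' ^ α * ((Real.log ρ) ^ (-k) * I)) := by
              rw [hρeq]; ring
          _ ≤ r ^ α * (ρ' ^ α * C₀) := by
              refine mul_le_mul_of_nonneg_left (mul_le_mul_of_nonneg_left ?_
                (Real.rpow_pos_of_pos hρ'pos α).le) hrαpos.le
              calc (Real.log ρ) ^ (-k) * I ≤ (Real.log ρ) ^ (-k) * C₀ :=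
                    mul_le_mul_of_nonneg_left hI hlpk.le
                _ ≤ 1 * C₀ :=
                    mul_le_mul_of_nonneg_right (hpow_le_one _ hlogρ) hC₀0
                _ = C₀ := one_mul _
          _ ≤ r ^ α * (ρ₁ ^ α * C₀) := by
              refine mul_le_mul_of_nonneg_left
                (mul_le_mul_of_nonneg_right
                  (Real.rpow_le_rpow hρ'pos.le h.le hα₀.le) hC₀0) hrαpos.le
          _ ≤ r ^ α * M := by
              refine mul_le_mul_of_nonneg_left ?_ hrαpos.le
              rw [hMdef]; linarith [mul_comm C₀ (ρ₁ ^ α)]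
          _ = M * r ^ α := mul_comm _ _
          _ ≤ M * max 1 (‖y‖ ^ α) := mul_le_mul_of_nonneg_left hrα hM0
end

section
/- Let X be an ℝ^d-valued random vector, α ∈ (0,2), k ≥ 0, and suppose lim_{ρ→∞} ρ^α (ln ρ)^{−k} E[1_{|X|≥ρz} f(X/|X|)] = z^{−α} ∫_{S^{d−1}} f(s) ν(ds) for all z > 0 and all bounded continuous f on S^{d−1}, where ν is a finite nonnegative measure. Then for every δ > 0 and every bounded continuous W on ℝ^d with |W(x)| ≤ C|x|²/(1+|x|²), the small-ball contribution satisfies limsup_{ρ→∞} ρ^α (ln ρ)^{−k} E[W(X/ρ) 1_{|X|≤δρ}] ≤ C' δ^{2−α} for a constant C' independent of δ. -/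
open MeasureTheory Filter Real

set_option maxHeartbeats 2000000 in
theorem small_ball_contribution_estimate
    {Ω : Type*} [MeasurableSpace Ω] (μ : Measure Ω) [IsProbabilityMeasure μ]
    (d : ℕ) (X : Ω → EuclideanSpace ℝ (Fin d)) (hX : Measurable X)
    (α k : ℝ) (hα₀ : 0 < α) (hα₂ : α < 2) (hk : 0 ≤ k)
    (ν : Measure (EuclideanSpace ℝ (Fin d))) [IsFiniteMeasure ν]
    (htail : ∀ z > (0:ℝ), ∀ f : EuclideanSpace ℝ (Fin d) → ℝ, Continuous f →
      (∃ C : ℝ, ∀ x, |f x| ≤ C) →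
      Tendsto (fun ρ : ℝ => ρ ^ α * (Real.log ρ) ^ (-k) *
          ∫ ω in {ω | ρ * z ≤ ‖X ω‖}, f (‖X ω‖⁻¹ • X ω) ∂μ) atTop
        (nhds (z ^ (-α) * ∫ s, f s ∂ν))) :
    ∀ W : EuclideanSpace ℝ (Fin d) → ℝ, Continuous W →
      (∃ C : ℝ, ∀ x, |W x| ≤ C * ‖x‖ ^ 2 / (1 + ‖x‖ ^ 2)) →
      ∃ C' : ℝ, ∀ δ > (0:ℝ),
        Filter.limsup (fun ρ : ℝ => ρ ^ α * (Real.log ρ) ^ (-k) *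
            ∫ ω in {ω | ‖X ω‖ ≤ δ * ρ}, W (ρ⁻¹ • X ω) ∂μ) atTop
          ≤ C' * δ ^ (2 - α) := by
  rintro W hWc ⟨C0, hC0⟩
  set C : ℝ := max C0 0 with hCdef
  have hC : 0 ≤ C := le_max_right _ _
  -- pointwise bound on W
  have hWb : ∀ x : EuclideanSpace ℝ (Fin d), |W x| ≤ C * min (‖x‖ ^ 2) 1 := by
    intro x
    have hden : (1:ℝ) ≤ 1 + ‖x‖ ^ 2 := le_add_of_nonneg_right (by positivity)
    have hden0 : (0:ℝ) < 1 + ‖x‖ ^ 2 := by positivity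
    have hr0 : 0 ≤ ‖x‖ ^ 2 / (1 + ‖x‖ ^ 2) := by positivity
    have hr1 : ‖x‖ ^ 2 / (1 + ‖x‖ ^ 2) ≤ 1 := by
      rw [div_le_one hden0]; linarith
    have hr2 : ‖x‖ ^ 2 / (1 + ‖x‖ ^ 2) ≤ ‖x‖ ^ 2 := by
      apply div_le_self (by positivity) hden
    calc |W x| ≤ C0 * ‖x‖ ^ 2 / (1 + ‖x‖ ^ 2) := hC0 x
      _ = C0 * (‖x‖ ^ 2 / (1 + ‖x‖ ^ 2)) := by ring
      _ ≤ C * (‖x‖ ^ 2 / (1 + ‖x‖ ^ 2)) :=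
          mul_le_mul_of_nonneg_right (le_max_left _ _) hr0
      _ ≤ C * min (‖x‖ ^ 2) 1 :=
          mul_le_mul_of_nonneg_left (le_min hr2 hr1) hC
  -- tail probability bound
  have h1 := htail 1 one_pos (fun _ => 1) continuous_const ⟨1, fun _ => by norm_num⟩
  simp only [mul_one, integral_const, smul_eq_mul, Real.one_rpow, one_mul,
    Measure.restrict_apply_univ, measureReal_restrict_apply_univ] at h1
  set B : ℝ := (ν Set.univ).toReal + 1 with hBdef
  have hB : 0 ≤ B := by positivity
  have h2 : ∀ᶠ ρ in atTop,
      ρ ^ α * (Real.log ρ) ^ (-k) * (μ {ω | ρ ≤ ‖X ω‖}).toReal ≤ B :=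
    h1.eventually (eventually_le_nhds (by rw [hBdef]; exact lt_add_one _))
  obtain ⟨a, ha⟩ := eventually_atTop.mp h2
  set ρ₀ : ℝ := max a 2 with hρ₀def
  have hρ₀2 : (2:ℝ) ≤ ρ₀ := le_max_right _ _
  have hρ₀1 : (1:ℝ) < ρ₀ := by linarith
  have hρ₀0 : (0:ℝ) < ρ₀ := by linarith
  have htailP : ∀ r, ρ₀ ≤ r →
      (μ {ω | r ≤ ‖X ω‖}).toReal ≤ B * (r ^ (-α) * (Real.log r) ^ k) := by
    intro r hr
    have hr1 : (1:ℝ) < r := lt_of_lt_of_le hρ₀1 hr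
    have hr0 : (0:ℝ) < r := by linarith
    have hlog : 0 < Real.log r := Real.log_pos hr1
    have hpre : 0 < r ^ α * (Real.log r) ^ (-k) := by positivity
    have h3 := ha r (le_trans (le_max_left _ _) hr)
    have h4 : (μ {ω | r ≤ ‖X ω‖}).toReal ≤ B / (r ^ α * (Real.log r) ^ (-k)) := by
      rw [le_div_iff₀ hpre]; linarith [h3]
    calc (μ {ω | r ≤ ‖X ω‖}).toReal ≤ B / (r ^ α * (Real.log r) ^ (-k)) := h4
      _ = B * (r ^ (-α) * (Real.log r) ^ k) := by
          rw [Real.rpow_neg hr0.le, Real.rpow_neg (le_of_lt hlog)]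
          field_simp
  refine ⟨C * B / (1 - α/2), ?_⟩
  intro δ hδ
  have hα2' : (0:ℝ) < 1 - α/2 := by linarith
  set m : ℝ := min (δ ^ 2) 1 with hmdef
  have hm0 : 0 < m := lt_min (by positivity) one_pos
  have hm1 : m ≤ 1 := min_le_right _ _
  set I : ℝ := m ^ (1 - α/2) / (1 - α/2) with hIdef
  have hI0 : 0 ≤ I := by positivity
  set D : ℝ := C * B * I with hDdef
  have hD0 : 0 ≤ D := by positivity
  set f : ℝ → ℝ := fun ρ => ρ ^ α * (Real.log ρ) ^ (-k) *
      ∫ ω in {ω | ‖X ω‖ ≤ δ * ρ}, W (ρ⁻¹ • X ω) ∂μ with hfdef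
  set g : ℝ → ℝ := fun ρ => C * (ρ₀ ^ 2 * (ρ ^ (α - 2) * (Real.log ρ) ^ (-k))) + D
    with hgdef
  -- the key eventual bound
  have key : ∀ᶠ ρ in atTop, |f ρ| ≤ g ρ := by
    filter_upwards [eventually_ge_atTop ρ₀] with ρ hρ
    have hρ1 : (1:ℝ) < ρ := lt_of_lt_of_le hρ₀1 hρ
    have hρ0 : (0:ℝ) < ρ := by linarith
    have hlog : 0 < Real.log ρ := Real.log_pos hρ1
    have hpre : 0 < ρ ^ α * (Real.log ρ) ^ (-k) := by positivity
    set c : ℝ := (ρ₀ / ρ) ^ 2 with hcdef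
    have hc0 : 0 < c := by positivity
    set G : Ω → ℝ := fun ω => min ((‖X ω‖ / ρ) ^ 2) m with hGdef
    have hGmeas : Measurable G := ((hX.norm.div_const ρ).pow_const 2).min measurable_const
    have hG0 : ∀ ω, 0 ≤ G ω := fun ω => le_min (by positivity) hm0.le
    have hGle : ∀ ω, G ω ≤ m := fun ω => min_le_right _ _
    have hsmeas : MeasurableSet {ω | ‖X ω‖ ≤ δ * ρ} :=
      measurableSet_le hX.norm measurable_const
    -- step 1 : bound the integral by ∫ C * G
    have hW'meas : AEStronglyMeasurable (fun ω => W (ρ⁻¹ • X ω)) μ :=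
      (hWc.measurable.comp (hX.const_smul ρ⁻¹)).aestronglyMeasurable
    have hW'bd : ∀ ω, |W (ρ⁻¹ • X ω)| ≤ C := by
      intro ω
      refine le_trans (hWb _) ?_
      have : min (‖ρ⁻¹ • X ω‖ ^ 2) 1 ≤ 1 := min_le_right _ _
      nlinarith [this, hC]
    have hW'int : Integrable (fun ω => W (ρ⁻¹ • X ω)) μ := by
      refine Integrable.mono' (integrable_const C) hW'meas (Eventually.of_forall ?_)
      intro ω; rw [Real.norm_eq_abs]; exact hW'bd ω
    have hCGint : Integrable (fun ω => C * G ω) μ := by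
      refine Integrable.mono' (integrable_const (C * m)) 
        ((hGmeas.const_mul C).aestronglyMeasurable) (Eventually.of_forall ?_)
      intro ω; rw [Real.norm_eq_abs, abs_of_nonneg (mul_nonneg hC (hG0 ω))]
      exact mul_le_mul_of_nonneg_left (hGle ω) hC
    have hnorm : ∀ ω, ‖ρ⁻¹ • X ω‖ = ‖X ω‖ / ρ := by
      intro ω
      rw [norm_smul, Real.norm_eq_abs, abs_inv, abs_of_pos hρ0, div_eq_inv_mul]
    have step1 : |∫ ω in {ω | ‖X ω‖ ≤ δ * ρ}, W (ρ⁻¹ • X ω) ∂μ| ≤ ∫ ω, C * G ω ∂μ := by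
      have habs : |∫ ω in {ω | ‖X ω‖ ≤ δ * ρ}, W (ρ⁻¹ • X ω) ∂μ|
          ≤ ∫ ω in {ω | ‖X ω‖ ≤ δ * ρ}, |W (ρ⁻¹ • X ω)| ∂μ := by
        simpa [Real.norm_eq_abs] using
          norm_integral_le_integral_norm (μ := μ.restrict {ω | ‖X ω‖ ≤ δ * ρ})
            (fun ω => W (ρ⁻¹ • X ω))
      refine le_trans habs ?_
      refine le_trans ?_ (setIntegral_le_integral (s := {ω | ‖X ω‖ ≤ δ * ρ}) hCGint
        (Eventually.of_forall fun ω => mul_nonneg hC (hG0 ω)))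
      refine setIntegral_mono_on hW'int.abs.integrableOn hCGint.integrableOn hsmeas ?_
      intro ω hω
      have hωs : ‖X ω‖ ≤ δ * ρ := hω
      have hsq : (‖X ω‖ / ρ) ^ 2 ≤ δ ^ 2 := by
        have h5 : ‖X ω‖ / ρ ≤ δ := (div_le_iff₀ hρ0).mpr (by linarith)
        nlinarith [norm_nonneg (X ω), hρ0, h5, div_nonneg (norm_nonneg (X ω)) hρ0.le]
      calc |W (ρ⁻¹ • X ω)| ≤ C * min (‖ρ⁻¹ • X ω‖ ^ 2) 1 := hWb _
        _ = C * min ((‖X ω‖ / ρ) ^ 2) 1 := by rw [hnorm ω]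
        _ ≤ C * G ω := by
            refine mul_le_mul_of_nonneg_left ?_ hC
            exact le_min (min_le_left _ _) (le_min (le_trans (min_le_left _ _) hsq)
              (min_le_right _ _))
    -- step 2 : layer cake
    have step2 : ∫ ω, C * G ω ∂μ
        = C * (∫⁻ t in Set.Ioi (0:ℝ), μ {ω | t ≤ G ω}).toReal := by
      rw [integral_const_mul, integral_eq_lintegral_of_nonneg_ae
        (Eventually.of_forall hG0) hGmeas.aestronglyMeasurable,
        lintegral_eq_lintegral_meas_le μ (Eventually.of_forall hG0) hGmeas.aemeasurable]
    -- step 5 : main estimate on the layered integral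
    set K : ℝ := B * (ρ ^ (-α) * (Real.log ρ) ^ k) with hKdef
    have hK0 : 0 ≤ K := by positivity
    have step5 : ∫⁻ t in Set.Ioi (0:ℝ), μ {ω | t ≤ G ω}
        ≤ ENNReal.ofReal c + ENNReal.ofReal K * ENNReal.ofReal I := by
      set F₁ : ℝ → ENNReal := (Set.Ioc (0:ℝ) c).indicator (fun _ => 1) with hF₁def
      set F₂ : ℝ → ENNReal := (Set.Ioc (0:ℝ) m).indicator
        (fun t => ENNReal.ofReal (K * t ^ (-(α/2)))) with hF₂def
      have hF₁meas : Measurable F₁ := measurable_const.indicator measurableSet_Ioc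
      have hpt : ∀ t ∈ Set.Ioi (0:ℝ), μ {ω | t ≤ G ω} ≤ F₁ t + F₂ t := by
        intro t ht
        have ht0 : (0:ℝ) < t := ht
        rcases le_or_gt t c with htc | htc
        · refine le_trans ?_ (le_add_of_nonneg_right zero_le)
          rw [hF₁def, Set.indicator_of_mem (Set.mem_Ioc.mpr ⟨ht0, htc⟩)]
          exact prob_le_one
        rcases le_or_gt t m with htm | htm
        · -- main regime : use the tail bound at r = ρ * √t
          refine le_trans ?_ (le_add_of_nonneg_left zero_le)
          rw [hF₂def, Set.indicator_of_mem (Set.mem_Ioc.mpr ⟨ht0, htm⟩)]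
          set r : ℝ := ρ * Real.sqrt t with hrdef
          have hst0 : 0 < Real.sqrt t := Real.sqrt_pos.mpr ht0
          have hr0 : 0 < r := by positivity
          have hrρ₀ : ρ₀ ≤ r := by
            have h8 : ρ₀ / ρ ≤ Real.sqrt t := by
              have := Real.sqrt_le_sqrt htc.le
              rwa [Real.sqrt_sq (by positivity)] at this
            calc ρ₀ = ρ * (ρ₀ / ρ) := by field_simp
              _ ≤ ρ * Real.sqrt t := by
                  exact mul_le_mul_of_nonneg_left h8 hρ0.le
          have hrρ : r ≤ ρ := by
            have h9 : Real.sqrt t ≤ 1 := by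
              rw [show (1:ℝ) = Real.sqrt 1 by simp]
              exact Real.sqrt_le_sqrt (le_trans htm hm1)
            calc r = ρ * Real.sqrt t := rfl
              _ ≤ ρ * 1 := mul_le_mul_of_nonneg_left h9 hρ0.le
              _ = ρ := mul_one ρ
          have hsub : {ω | t ≤ G ω} ⊆ {ω | r ≤ ‖X ω‖} := by
            intro ω hω
            have h10 : t ≤ (‖X ω‖ / ρ) ^ 2 := le_trans hω (min_le_left _ _)
            have h11 : Real.sqrt t ≤ ‖X ω‖ / ρ := by
              have := Real.sqrt_le_sqrt h10
              rwa [Real.sqrt_sq (by positivity)] at this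
            show r ≤ ‖X ω‖
            rw [hrdef]
            calc ρ * Real.sqrt t ≤ ρ * (‖X ω‖ / ρ) := by
                  exact mul_le_mul_of_nonneg_left h11 hρ0.le
              _ = ‖X ω‖ := by field_simp
          refine le_trans (measure_mono hsub) ?_
          refine (ENNReal.le_ofReal_iff_toReal_le (measure_ne_top μ _) ?_).2 ?_
          · have h12 : (0:ℝ) ≤ t ^ (-(α/2)) := Real.rpow_nonneg ht0.le _
            positivity
          refine le_trans (htailP r hrρ₀) ?_
          have e1 : r ^ (-α) = ρ ^ (-α) * t ^ (-(α/2)) := by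
            rw [hrdef, Real.mul_rpow hρ0.le hst0.le, Real.sqrt_eq_rpow,
              ← Real.rpow_mul ht0.le, show (1:ℝ)/2 * (-α) = -(α/2) by ring]
          have e2 : Real.log r ^ k ≤ Real.log ρ ^ k := by
            refine Real.rpow_le_rpow (Real.log_nonneg ?_) (Real.log_le_log hr0 hrρ) hk
            linarith [hρ₀1, hrρ₀]
          have h13 : (0:ℝ) ≤ t ^ (-(α/2)) := Real.rpow_nonneg ht0.le _
          calc B * (r ^ (-α) * Real.log r ^ k)
              ≤ B * (r ^ (-α) * Real.log ρ ^ k) := by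
                have hrneg : (0:ℝ) ≤ r ^ (-α) := Real.rpow_nonneg hr0.le _
                have hB' : (0:ℝ) ≤ B := hB
                nlinarith [mul_le_mul_of_nonneg_left e2 hrneg]
            _ = K * t ^ (-(α/2)) := by rw [hKdef, e1]; ring
        · -- t > m : the set is empty
          have : {ω | t ≤ G ω} = ∅ := by
            ext ω
            simp only [Set.mem_setOf_eq, Set.mem_empty_iff_false, iff_false, not_le]
            exact lt_of_le_of_lt (hGle ω) htm
          rw [this, measure_empty]
          exact zero_le
      calc ∫⁻ t in Set.Ioi (0:ℝ), μ {ω | t ≤ G ω}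
          ≤ ∫⁻ t in Set.Ioi (0:ℝ), (F₁ t + F₂ t) := setLIntegral_mono' measurableSet_Ioi hpt
        _ = (∫⁻ t in Set.Ioi (0:ℝ), F₁ t) + ∫⁻ t in Set.Ioi (0:ℝ), F₂ t :=
            lintegral_add_left hF₁meas _
        _ ≤ ENNReal.ofReal c + ENNReal.ofReal K * ENNReal.ofReal I := by
            gcongr
            · -- indicator of Ioc 0 c
              rw [hF₁def, lintegral_indicator measurableSet_Ioc, setLIntegral_one,
                Measure.restrict_apply measurableSet_Ioc]
              refine le_trans (measure_mono Set.inter_subset_left) ?_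
              rw [Real.volume_Ioc, sub_zero]
            · -- the rpow part
              rw [hF₂def, lintegral_indicator measurableSet_Ioc,
                Measure.restrict_restrict measurableSet_Ioc,
                Set.inter_eq_left.mpr (Set.Ioc_subset_Ioi_self)]
              have hnn : 0 ≤ᵐ[volume.restrict (Set.Ioc (0:ℝ) m)]
                  fun t => t ^ (-(α/2)) := by
                refine (ae_restrict_iff' measurableSet_Ioc).2 (Eventually.of_forall ?_)
                exact fun t ht => Real.rpow_nonneg ht.1.le _
              refine le_of_eq ?_
              have hintg : IntegrableOn (fun t : ℝ => t ^ (-(α/2)))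
                  (Set.Ioc (0:ℝ) m) volume :=
                (intervalIntegral.intervalIntegrable_rpow' (by linarith)).1
              have heval : ∫ t in Set.Ioc (0:ℝ) m, t ^ (-(α/2)) = I := by
                rw [← intervalIntegral.integral_of_le hm0.le,
                  integral_rpow (Or.inl (by linarith))]
                rw [Real.zero_rpow (by linarith), hIdef]
                rw [show -(α/2) + 1 = 1 - α/2 by ring]
                ring
              calc ∫⁻ t in Set.Ioc (0:ℝ) m, ENNReal.ofReal (K * t ^ (-(α/2)))
                  = ∫⁻ t in Set.Ioc (0:ℝ) m,
                      ENNReal.ofReal K * ENNReal.ofReal (t ^ (-(α/2))) := by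
                    refine lintegral_congr fun t => ?_
                    rw [ENNReal.ofReal_mul hK0]
                _ = ENNReal.ofReal K * ∫⁻ t in Set.Ioc (0:ℝ) m,
                      ENNReal.ofReal (t ^ (-(α/2))) :=
                    lintegral_const_mul' _ _ ENNReal.ofReal_ne_top
                _ = ENNReal.ofReal K * ENNReal.ofReal I := by
                    rw [← ofReal_integral_eq_lintegral_ofReal hintg hnn, heval]
    -- put the three steps together
    have hRfin : ENNReal.ofReal c + ENNReal.ofReal K * ENNReal.ofReal I ≠ ⊤ :=
      ENNReal.add_ne_top.2 ⟨ENNReal.ofReal_ne_top,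
        ENNReal.mul_ne_top ENNReal.ofReal_ne_top ENNReal.ofReal_ne_top⟩
    have htR : (∫⁻ t in Set.Ioi (0:ℝ), μ {ω | t ≤ G ω}).toReal ≤ c + K * I := by
      have h14 := ENNReal.toReal_mono hRfin step5
      rwa [← ENNReal.ofReal_mul hK0, ← ENNReal.ofReal_add hc0.le
        (mul_nonneg hK0 hI0), ENNReal.toReal_ofReal
        (by positivity : (0:ℝ) ≤ c + K * I)] at h14
    have hpreK : ρ ^ α * Real.log ρ ^ (-k) * K = B := by
      have e1 : ρ ^ α * ρ ^ (-α) = 1 := by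
        rw [← Real.rpow_add hρ0]; simp
      have e2 : Real.log ρ ^ (-k) * Real.log ρ ^ k = 1 := by
        rw [← Real.rpow_add hlog]; simp
      calc ρ ^ α * Real.log ρ ^ (-k) * K
          = B * ((ρ ^ α * ρ ^ (-α)) * (Real.log ρ ^ (-k) * Real.log ρ ^ k)) := by
            rw [hKdef]; ring
        _ = B := by rw [e1, e2]; ring
    have hprec : ρ ^ α * Real.log ρ ^ (-k) * c
        = ρ₀ ^ 2 * (ρ ^ (α - 2) * Real.log ρ ^ (-k)) := by
      have h6 : ρ ^ (α - 2) = ρ ^ α / ρ ^ (2:ℕ) := by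
        rw [show (α - 2) = α - ((2:ℕ):ℝ) by norm_num, Real.rpow_sub hρ0,
          Real.rpow_natCast]
      rw [hcdef, h6]
      field_simp
    calc |f ρ| = ρ ^ α * Real.log ρ ^ (-k)
          * |∫ ω in {ω | ‖X ω‖ ≤ δ * ρ}, W (ρ⁻¹ • X ω) ∂μ| := by
          rw [hfdef, abs_mul, abs_of_pos hpre]
      _ ≤ ρ ^ α * Real.log ρ ^ (-k) * ∫ ω, C * G ω ∂μ :=
          mul_le_mul_of_nonneg_left step1 hpre.le
      _ = ρ ^ α * Real.log ρ ^ (-k)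
          * (C * (∫⁻ t in Set.Ioi (0:ℝ), μ {ω | t ≤ G ω}).toReal) := by rw [step2]
      _ ≤ ρ ^ α * Real.log ρ ^ (-k) * (C * (c + K * I)) := by gcongr
      _ = C * (ρ ^ α * Real.log ρ ^ (-k) * c)
          + C * (ρ ^ α * Real.log ρ ^ (-k) * K) * I := by ring
      _ = g ρ := by rw [hpreK, hprec, hgdef, hDdef]
  -- pass to the limit
  have hlim0 : Tendsto (fun ρ : ℝ => ρ ^ (α - 2) * Real.log ρ ^ (-k)) atTop (nhds 0) := by
    have h7 : Tendsto (fun ρ : ℝ => ρ ^ (α - 2)) atTop (nhds 0) := by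
      have := tendsto_rpow_neg_atTop (y := 2 - α) (by linarith)
      simpa [show -(2 - α) = α - 2 by ring] using this
    refine squeeze_zero' ?_ ?_ h7
    · filter_upwards [eventually_ge_atTop (1:ℝ)] with ρ hρ
      have h15 : (0:ℝ) ≤ ρ ^ (α - 2) := Real.rpow_nonneg (by linarith) _
      have h16 : (0:ℝ) ≤ Real.log ρ ^ (-k) := Real.rpow_nonneg (Real.log_nonneg hρ) _
      positivity
    · filter_upwards [eventually_ge_atTop (Real.exp 1)] with ρ hρ
      have hρ1 : (1:ℝ) ≤ ρ := le_trans (by nlinarith [Real.add_one_le_exp (1:ℝ)]) hρ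
      have hρ0 : (0:ℝ) < ρ := by linarith
      have hl1 : (1:ℝ) ≤ Real.log ρ := by
        rw [show (1:ℝ) = Real.log (Real.exp 1) by simp]
        exact Real.log_le_log (Real.exp_pos 1) hρ
      have h17 : Real.log ρ ^ (-k) ≤ 1 :=
        Real.rpow_le_one_of_one_le_of_nonpos hl1 (neg_nonpos.mpr hk)
      have h15 : (0:ℝ) ≤ ρ ^ (α - 2) := Real.rpow_nonneg hρ0.le _
      nlinarith
  have hgl : Tendsto g atTop (nhds D) := by
    have h18 := ((hlim0.const_mul (ρ₀ ^ 2)).const_mul C).add_const D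
    simpa using h18
  have hev : ∀ᶠ ρ in atTop, -(D + 1) ≤ f ρ := by
    filter_upwards [key, hgl.eventually (eventually_le_nhds (lt_add_one D))] with ρ h19 h20
    exact (abs_le.mp (h19.trans h20)).1
  have hmain : limsup f atTop ≤ limsup g atTop :=
    limsup_le_limsup (key.mono fun ρ h => le_trans (le_abs_self _) h)
      (isCoboundedUnder_le_of_eventually_le atTop hev) hgl.isBoundedUnder_le
  rw [hgl.limsup_eq] at hmain
  refine le_trans hmain ?_
  have hmb : m ^ (1 - α/2) ≤ δ ^ (2 - α) := by
    rcases le_or_gt δ 1 with h | h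
    · have hmeq : m = δ ^ 2 := min_eq_left (by nlinarith)
      rw [hmeq, ← Real.rpow_natCast δ 2, ← Real.rpow_mul hδ.le]
      apply le_of_eq
      congr 1
      push_cast
      ring
    · have hmeq : m = 1 := min_eq_right (by nlinarith)
      rw [hmeq, Real.one_rpow]
      exact Real.one_le_rpow h.le (by linarith)
  calc D = C * B / (1 - α/2) * m ^ (1 - α/2) := by rw [hDdef, hIdef]; ring
    _ ≤ C * B / (1 - α/2) * δ ^ (2 - α) :=
        mul_le_mul_of_nonneg_left hmb (by positivity)
end

section
/- Suppose a random m-dimensional vector Z satisfies lim_{ρ→∞} ρ^α (ln ρ)^{−k} E[W(Z/ρ)] = ∫₀^∞ ∫_{S^{m−1}} W(sx) ν(ds) x^{−(1+α)} dx for some finite measure ν on S^{m−1} with ν(S^{m−1}) > 0 and all bounded continuous W with |W(x)| ≤ C|x|²/(1+|x|²). Let T : ℝ^m → ℝ^d (d ≤ m) be linear. Then Z' = TZ satisfies the same limit relation with the measure ν' on S^{d−1} defined by ν'(Γ) = ∫_{S^{m−1}} 1_Γ(Ts/|Ts|) |Ts|^α ν(ds) for Borel Γ ⊆ S^{d−1}.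 -/
open Classical
open MeasureTheory Filter Real

set_option maxHeartbeats 1000000 in
theorem regular_variation_linear_image
    {Ω : Type*} [MeasurableSpace Ω] (μ : Measure Ω) [IsProbabilityMeasure μ]
    (m d : ℕ) (hdm : d ≤ m)
    (Z : Ω → EuclideanSpace ℝ (Fin m)) (hZ : Measurable Z)
    (α k : ℝ) (hα₀ : 0 < α) (hα₂ : α < 2) (hk : 0 ≤ k)
    (ν : Measure (EuclideanSpace ℝ (Fin m))) [IsFiniteMeasure ν]
    (hν0 : 0 < ν Set.univ) (hsph : ∀ᵐ s ∂ν, ‖s‖ = 1)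
    (hZtail : ∀ W : EuclideanSpace ℝ (Fin m) → ℝ, Continuous W →
      (∃ C : ℝ, ∀ x, |W x| ≤ C * ‖x‖ ^ 2 / (1 + ‖x‖ ^ 2)) →
      Tendsto (fun ρ : ℝ => ρ ^ α * (Real.log ρ) ^ (-k) *
          ∫ ω, W (ρ⁻¹ • Z ω) ∂μ) atTop
        (nhds (∫ x in Set.Ioi (0:ℝ), (∫ s, W (x • s) ∂ν) * x ^ (-(1 + α)))))
    (T : EuclideanSpace ℝ (Fin m) →ₗ[ℝ] EuclideanSpace ℝ (Fin d)) :
    ∀ W' : EuclideanSpace ℝ (Fin d) → ℝ, Continuous W' →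
      (∃ C : ℝ, ∀ x, |W' x| ≤ C * ‖x‖ ^ 2 / (1 + ‖x‖ ^ 2)) →
      Tendsto (fun ρ : ℝ => ρ ^ α * (Real.log ρ) ^ (-k) *
          ∫ ω, W' (ρ⁻¹ • T (Z ω)) ∂μ) atTop
        (nhds (∫ x in Set.Ioi (0:ℝ),
          (∫ s, (if T s = 0 then 0 else ‖T s‖ ^ α * W' (x • (‖T s‖⁻¹ • T s))) ∂ν)
            * x ^ (-(1 + α)))) := by
  intro W' hW'c hW'b
  obtain ⟨C₀, hC₀⟩ := hW'b
  have hTc : Continuous T := T.continuous_of_finiteDimensional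
  set C : ℝ := max C₀ 0 with hCdef
  have hC0 : (0:ℝ) ≤ C := le_max_right _ _
  have hC : ∀ y, |W' y| ≤ C * ‖y‖ ^ 2 / (1 + ‖y‖ ^ 2) := by
    intro y
    refine (hC₀ y).trans ?_
    have h1 : (0:ℝ) < 1 + ‖y‖ ^ 2 := by positivity
    have h2 : C₀ * ‖y‖ ^ 2 ≤ C * ‖y‖ ^ 2 :=
      mul_le_mul_of_nonneg_right (le_max_left _ _) (sq_nonneg _)
    exact (div_le_div_iff_of_pos_right h1).mpr h2
  have hW0 : W' 0 = 0 := by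
    have h := hC 0
    simp only [norm_zero] at h
    norm_num at h
    exact h
  have hCmin : ∀ y, |W' y| ≤ C * min (‖y‖ ^ 2) 1 := by
    intro y
    refine (hC y).trans ?_
    have h1 : (0:ℝ) < 1 + ‖y‖ ^ 2 := by positivity
    rcases le_total (‖y‖ ^ 2) 1 with h | h
    · rw [min_eq_left h, div_le_iff₀ h1]
      nlinarith [mul_nonneg (mul_nonneg hC0 (sq_nonneg ‖y‖)) (sq_nonneg ‖y‖)]
    · rw [min_eq_right h, div_le_iff₀ h1, mul_one]
      nlinarith [mul_nonneg hC0 (sq_nonneg ‖y‖)]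
  obtain ⟨M, hM0, hM⟩ : ∃ M : ℝ, 0 ≤ M ∧ ∀ z, ‖T z‖ ≤ M * ‖z‖ := by
    refine ⟨‖LinearMap.toContinuousLinearMap T‖, norm_nonneg _, fun z => ?_⟩
    simpa using (LinearMap.toContinuousLinearMap T).le_opNorm z
  -- the constant K
  set K : ℝ := (1 + M) ^ 2 with hKdef
  have hK1 : (1:ℝ) ≤ K := by nlinarith
  have hK0 : (0:ℝ) ≤ K := by linarith
  have hMK : M ^ 2 ≤ K := by nlinarith
  have hMαK : M ^ α ≤ K := by
    calc M ^ α ≤ (1 + M) ^ α := Real.rpow_le_rpow hM0 (by linarith) hα₀.le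
      _ ≤ (1 + M) ^ (2:ℝ) := Real.rpow_le_rpow_of_exponent_le (by linarith) (by linarith)
      _ = K := by
          rw [hKdef, show ((2:ℝ)) = ((2:ℕ):ℝ) by norm_num, Real.rpow_natCast]
  -- the dominating function
  set G : ℝ → ℝ := fun x => C * K * min (x ^ 2) 1 * x ^ (-(1 + α)) with hGdef
  have hminnn : ∀ x : ℝ, (0:ℝ) ≤ min (x ^ 2) 1 := fun x => le_min (by positivity) one_pos.le
  have hGnn : ∀ x : ℝ, 0 < x → 0 ≤ G x := by
    intro x hx
    have h1 : (0:ℝ) ≤ x ^ (-(1+α)) := Real.rpow_nonneg hx.le _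
    exact mul_nonneg (mul_nonneg (mul_nonneg hC0 hK0) (hminnn x)) h1
  have hrpow : ∀ c : ℝ, Measurable fun x : ℝ => x ^ c := by
    intro c
    apply measurable_of_continuousOn_compl_singleton (0:ℝ)
    intro x hx
    exact (Real.continuousAt_rpow_const x c
      (Or.inl (Set.mem_compl_singleton_iff.mp hx))).continuousWithinAt
  have hGmeas : Measurable G := by
    exact (measurable_const.mul ((measurable_id.pow_const 2).min measurable_const)).mul
      (hrpow _)
  have hpow21 : ∀ x : ℝ, 0 < x → x ^ 2 * x ^ (-(1+α)) = x ^ (1 - α) := by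
    intro x hx
    rw [show (x:ℝ) ^ 2 = x ^ ((2:ℕ):ℝ) from (Real.rpow_natCast x 2).symm, ← Real.rpow_add hx]
    congr 1
    push_cast
    ring
  have hGint : IntegrableOn G (Set.Ioi (0:ℝ)) volume := by
    have h01 : IntegrableOn G (Set.Ioc (0:ℝ) 1) volume := by
      have hbase : IntegrableOn (fun x : ℝ => x ^ (1 - α)) (Set.Ioc (0:ℝ) 1) volume := by
        have h := intervalIntegral.intervalIntegrable_rpow' (a := 0) (b := 1) (r := 1 - α)
          (by linarith)
        rwa [intervalIntegrable_iff_integrableOn_Ioc_of_le (by norm_num)] at h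
      refine Integrable.mono' (hbase.const_mul (C * K)) hGmeas.aestronglyMeasurable.restrict ?_
      filter_upwards [ae_restrict_mem measurableSet_Ioc] with x hx
      have hx0 : (0:ℝ) < x := hx.1
      have hxp : (0:ℝ) ≤ x ^ (-(1+α)) := Real.rpow_nonneg hx0.le _
      rw [Real.norm_eq_abs, abs_of_nonneg (hGnn x hx0)]
      calc C * K * min (x ^ 2) 1 * x ^ (-(1+α)) ≤ C * K * x ^ 2 * x ^ (-(1+α)) := by
            refine mul_le_mul_of_nonneg_right ?_ hxp
            exact mul_le_mul_of_nonneg_left (min_le_left _ _) (mul_nonneg hC0 hK0)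
        _ = C * K * (x ^ 2 * x ^ (-(1+α))) := by ring
        _ = C * K * x ^ (1 - α) := by rw [hpow21 x hx0]
    have h1i : IntegrableOn G (Set.Ioi (1:ℝ)) volume := by
      refine Integrable.mono'
        ((integrableOn_Ioi_rpow_of_lt (a := -(1+α)) (by linarith) one_pos).const_mul (C * K))
        hGmeas.aestronglyMeasurable.restrict ?_
      filter_upwards [ae_restrict_mem measurableSet_Ioi] with x hx
      have hx0 : (0:ℝ) < x := lt_trans one_pos hx
      have hxp : (0:ℝ) ≤ x ^ (-(1+α)) := Real.rpow_nonneg hx0.le _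
      rw [Real.norm_eq_abs, abs_of_nonneg (hGnn x hx0)]
      calc C * K * min (x ^ 2) 1 * x ^ (-(1+α)) ≤ C * K * 1 * x ^ (-(1+α)) := by
            refine mul_le_mul_of_nonneg_right ?_ hxp
            exact mul_le_mul_of_nonneg_left (min_le_right _ _) (mul_nonneg hC0 hK0)
        _ = C * K * x ^ (-(1+α)) := by ring
    have h := h01.union h1i
    rwa [Set.Ioc_union_Ioi_eq_Ioi (by norm_num : (0:ℝ) ≤ 1)] at h
  -- key pointwise bound
  have hWb' : ∀ (y : EuclideanSpace ℝ (Fin d)) (x : ℝ), 0 < x → ‖y‖ ≤ M * x →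
      |W' y| ≤ C * K * min (x ^ 2) 1 := by
    intro y x hx hy
    refine (hCmin y).trans ?_
    rw [mul_assoc]
    refine mul_le_mul_of_nonneg_left ?_ hC0
    rcases le_total x 1 with h | h
    · have h2 : ‖y‖ ^ 2 ≤ (M * x) ^ 2 := by
        have := mul_nonneg hM0 hx.le
        nlinarith [norm_nonneg y]
      calc min (‖y‖ ^ 2) 1 ≤ (M * x) ^ 2 := le_trans (min_le_left _ _) h2
        _ = M ^ 2 * x ^ 2 := by ring
        _ ≤ K * x ^ 2 := by nlinarith [sq_nonneg x]
        _ = K * min (x ^ 2) 1 := by rw [min_eq_left (by nlinarith : x ^ 2 ≤ 1)]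
    · calc min (‖y‖ ^ 2) 1 ≤ 1 := min_le_right _ _
        _ ≤ K * 1 := by linarith
        _ = K * min (x ^ 2) 1 := by rw [min_eq_right (by nlinarith : (1:ℝ) ≤ x ^ 2)]
  -- the product measure
  set P := (volume.restrict (Set.Ioi (0:ℝ))).prod ν with hPdef
  have hAE : ∀ᵐ p : ℝ × EuclideanSpace ℝ (Fin m) ∂P, p.1 ∈ Set.Ioi (0:ℝ) ∧ ‖p.2‖ = 1 := by
    rw [hPdef, Measure.ae_prod_iff_ae_ae]
    · filter_upwards [ae_restrict_mem measurableSet_Ioi] with x hx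
      filter_upwards [hsph] with s hs
      exact ⟨hx, hs⟩
    · exact (measurable_fst measurableSet_Ioi).inter
        ((isClosed_eq (continuous_norm.comp continuous_snd) continuous_const).measurableSet)
  have hProdInt : ∀ F : ℝ × EuclideanSpace ℝ (Fin m) → ℝ, AEStronglyMeasurable F P →
      (∀ x s, 0 < x → ‖s‖ = 1 → |F (x, s)| ≤ G x) → Integrable F P := by
    intro F hFm hFb
    have hG1 : Integrable
        (fun p : ℝ × EuclideanSpace ℝ (Fin m) => G p.1 * (1:ℝ)) P :=
      hGint.mul_prod (integrable_const 1)
    simp only [mul_one] at hG1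
    refine hG1.mono' hFm ?_
    filter_upwards [hAE] with p hp
    rw [Real.norm_eq_abs]
    exact hFb p.1 p.2 hp.1 hp.2
  -- the two integrands on the product space
  set f₁ : ℝ × EuclideanSpace ℝ (Fin m) → ℝ :=
    fun p => W' (p.1 • T p.2) * p.1 ^ (-(1+α)) with hf₁def
  set f₂ : ℝ × EuclideanSpace ℝ (Fin m) → ℝ :=
    fun p => (if T p.2 = 0 then 0 else ‖T p.2‖ ^ α * W' (p.1 • (‖T p.2‖⁻¹ • T p.2)))
      * p.1 ^ (-(1+α)) with hf₂def
  have hf₁m : AEStronglyMeasurable f₁ P := by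
    apply Measurable.aestronglyMeasurable
    exact ((hW'c.comp (continuous_fst.smul (hTc.comp continuous_snd))).measurable).mul
      ((hrpow _).comp measurable_fst)
  have hf₂m : AEStronglyMeasurable f₂ P := by
    apply Measurable.aestronglyMeasurable
    refine Measurable.mul ?_ ((hrpow _).comp measurable_fst)
    refine Measurable.ite ?_ measurable_const ?_
    · exact (hTc.comp continuous_snd).measurable (measurableSet_singleton 0)
    · refine Measurable.mul ?_ ?_
      · exact (hrpow α).comp ((hTc.comp continuous_snd).norm.measurable)
      · refine hW'c.measurable.comp ?_
        exact measurable_fst.smul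
          ((((hTc.comp continuous_snd).norm.measurable).inv).smul
            (hTc.comp continuous_snd).measurable)
  have hf₁b : ∀ x s, 0 < x → ‖s‖ = 1 → |f₁ (x, s)| ≤ G x := by
    intro x s hx hs
    have hxp : (0:ℝ) ≤ x ^ (-(1+α)) := Real.rpow_nonneg hx.le _
    have hnorm : ‖x • T s‖ ≤ M * x := by
      rw [norm_smul, Real.norm_eq_abs, abs_of_pos hx]
      calc x * ‖T s‖ ≤ x * (M * ‖s‖) := mul_le_mul_of_nonneg_left (hM s) hx.le
        _ = M * x := by rw [hs]; ring
    calc |f₁ (x, s)| = |W' (x • T s)| * x ^ (-(1+α)) := by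
          rw [hf₁def]; simp only [abs_mul]; rw [abs_of_nonneg hxp]
      _ ≤ C * K * min (x ^ 2) 1 * x ^ (-(1+α)) :=
          mul_le_mul_of_nonneg_right (hWb' _ x hx hnorm) hxp
      _ = G x := rfl
  have hf₂b : ∀ x s, 0 < x → ‖s‖ = 1 → |f₂ (x, s)| ≤ G x := by
    intro x s hx hs
    have hxp : (0:ℝ) ≤ x ^ (-(1+α)) := Real.rpow_nonneg hx.le _
    by_cases hT : T s = 0
    · rw [hf₂def]
      simp only [hT, if_pos, zero_mul, abs_zero]
      exact hGnn x hx
    · have hTn : (0:ℝ) < ‖T s‖ := norm_pos_iff.mpr hT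
      have hu : ‖(‖T s‖⁻¹ • T s : EuclideanSpace ℝ (Fin d))‖ = 1 := by
        rw [norm_smul, norm_inv, norm_norm, inv_mul_cancel₀ hTn.ne']
      have hxu : ‖x • (‖T s‖⁻¹ • T s)‖ = x := by
        rw [norm_smul, hu, Real.norm_eq_abs, abs_of_pos hx, mul_one]
      have hTsM : ‖T s‖ ^ α ≤ K := by
        refine le_trans ?_ hMαK
        refine Real.rpow_le_rpow (norm_nonneg _) ?_ hα₀.le
        calc ‖T s‖ ≤ M * ‖s‖ := hM s
          _ = M := by rw [hs, mul_one]
      have hTsα : (0:ℝ) ≤ ‖T s‖ ^ α := Real.rpow_nonneg (norm_nonneg _) _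
      have hWu : |W' (x • (‖T s‖⁻¹ • T s))| ≤ C * min (x ^ 2) 1 := by
        have := hCmin (x • (‖T s‖⁻¹ • T s))
        rwa [hxu] at this
      calc |f₂ (x, s)|
          = ‖T s‖ ^ α * |W' (x • (‖T s‖⁻¹ • T s))| * x ^ (-(1+α)) := by
            rw [hf₂def]
            simp only [hT, if_neg, not_false_iff, abs_mul]
            rw [abs_of_nonneg hxp, abs_of_nonneg hTsα]
        _ ≤ K * (C * min (x ^ 2) 1) * x ^ (-(1+α)) := by
            refine mul_le_mul_of_nonneg_right ?_ hxp
            exact mul_le_mul hTsM hWu (abs_nonneg _) hK0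
        _ = G x := by rw [hGdef]; ring
  have hf₁int : Integrable f₁ P := hProdInt f₁ hf₁m hf₁b
  have hf₂int : Integrable f₂ P := hProdInt f₂ hf₂m hf₂b
  -- change of variables lemma
  have hscale : ∀ (u : EuclideanSpace ℝ (Fin d)) (c : ℝ), 0 < c →
      (∫ x in Set.Ioi (0:ℝ), W' ((c * x) • u) * x ^ (-(1+α)))
        = c ^ α * ∫ x in Set.Ioi (0:ℝ), W' (x • u) * x ^ (-(1+α)) := by
    intro u c hc
    have h1 := integral_comp_mul_left_Ioi (fun y => W' (y • u) * y ^ (-(1+α))) 0 hc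
    rw [mul_zero] at h1
    have h2 : (∫ x in Set.Ioi (0:ℝ), (fun y => W' (y • u) * y ^ (-(1+α))) (c * x))
        = c ^ (-(1+α)) * ∫ x in Set.Ioi (0:ℝ), W' ((c * x) • u) * x ^ (-(1+α)) := by
      rw [← integral_const_mul]
      refine setIntegral_congr_fun measurableSet_Ioi ?_
      intro x hx
      simp only
      rw [Real.mul_rpow hc.le (le_of_lt hx)]
      ring
    rw [h2] at h1
    have hcp : c ^ (-(1+α)) ≠ 0 := (Real.rpow_pos_of_pos hc _).ne'
    have h3 : (∫ x in Set.Ioi (0:ℝ), W' ((c * x) • u) * x ^ (-(1+α)))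
        = (c ^ (-(1+α)))⁻¹ * (c⁻¹ * ∫ x in Set.Ioi (0:ℝ), W' (x • u) * x ^ (-(1+α))) := by
      rw [smul_eq_mul] at h1
      field_simp at h1 ⊢
      linarith [h1]
    have h4 : (c ^ (-(1+α)))⁻¹ * c⁻¹ = c ^ α := by
      rw [← Real.rpow_neg hc.le, neg_neg,
        show c⁻¹ = c ^ (-1:ℝ) by rw [Real.rpow_neg hc.le, Real.rpow_one],
        ← Real.rpow_add hc]
      congr 1
      ring
    rw [h3, ← mul_assoc, h4]
  -- per-s equality of the inner integrals
  have hper : ∀ s : EuclideanSpace ℝ (Fin m),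
      (∫ x in Set.Ioi (0:ℝ), f₁ (x, s)) = ∫ x in Set.Ioi (0:ℝ), f₂ (x, s) := by
    intro s
    by_cases hT : T s = 0
    · rw [hf₁def, hf₂def]
      simp only [hT, if_pos, smul_zero, hW0, zero_mul]
    · have hTn : (0:ℝ) < ‖T s‖ := norm_pos_iff.mpr hT
      have hrepr : ∀ x : ℝ, x • T s = (‖T s‖ * x) • (‖T s‖⁻¹ • T s) := by
        intro x
        rw [smul_smul, mul_comm (‖T s‖) x, mul_assoc, mul_inv_cancel₀ hTn.ne', mul_one]
      have e1 : (∫ x in Set.Ioi (0:ℝ), f₁ (x, s))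
          = ∫ x in Set.Ioi (0:ℝ), W' ((‖T s‖ * x) • (‖T s‖⁻¹ • T s)) * x ^ (-(1+α)) := by
        refine setIntegral_congr_fun measurableSet_Ioi ?_
        intro x hx
        rw [hf₁def]
        simp only
        rw [hrepr x]
      rw [e1, hscale _ _ hTn, hf₂def]
      simp only [hT, if_neg, not_false_iff]
      rw [← integral_const_mul]
      refine setIntegral_congr_fun measurableSet_Ioi ?_
      intro x hx
      simp only
      ring
  -- the main integral identity
  have hEq : (∫ x in Set.Ioi (0:ℝ), (∫ s, W' (x • T s) ∂ν) * x ^ (-(1 + α)))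
      = ∫ x in Set.Ioi (0:ℝ),
          (∫ s, (if T s = 0 then 0 else ‖T s‖ ^ α * W' (x • (‖T s‖⁻¹ • T s))) ∂ν)
            * x ^ (-(1 + α)) := by
    have swap₁ := integral_integral_swap (f := fun x s => f₁ (x, s))
      (μ := volume.restrict (Set.Ioi (0:ℝ))) (ν := ν) (by exact hf₁int)
    have swap₂ := integral_integral_swap (f := fun x s => f₂ (x, s))
      (μ := volume.restrict (Set.Ioi (0:ℝ))) (ν := ν) (by exact hf₂int)
    have e1 : (∫ x in Set.Ioi (0:ℝ), (∫ s, W' (x • T s) ∂ν) * x ^ (-(1 + α)))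
        = ∫ x in Set.Ioi (0:ℝ), ∫ s, f₁ (x, s) ∂ν := by
      refine setIntegral_congr_fun measurableSet_Ioi ?_
      intro x hx
      simp only [hf₁def]
      rw [← integral_mul_const]
    have e2 : (∫ x in Set.Ioi (0:ℝ),
        (∫ s, (if T s = 0 then 0 else ‖T s‖ ^ α * W' (x • (‖T s‖⁻¹ • T s))) ∂ν)
          * x ^ (-(1 + α)))
        = ∫ x in Set.Ioi (0:ℝ), ∫ s, f₂ (x, s) ∂ν := by
      refine setIntegral_congr_fun measurableSet_Ioi ?_
      intro x hx
      simp only [hf₂def]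
      rw [← integral_mul_const]
    rw [e1, e2, swap₁, swap₂]
    exact integral_congr_ae (Filter.Eventually.of_forall hper)
  -- apply the hypothesis to W' ∘ T
  have hbound : ∃ Cb : ℝ, ∀ z : EuclideanSpace ℝ (Fin m),
      |W' (T z)| ≤ Cb * ‖z‖ ^ 2 / (1 + ‖z‖ ^ 2) := by
    refine ⟨C * (1 + M ^ 2), fun z => ?_⟩
    have h1 : (0:ℝ) < 1 + ‖T z‖ ^ 2 := by positivity
    have h2 : (0:ℝ) < 1 + ‖z‖ ^ 2 := by positivity
    have h3 : ‖T z‖ ^ 2 ≤ M ^ 2 * ‖z‖ ^ 2 := by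
      have := hM z
      nlinarith [norm_nonneg (T z), norm_nonneg z, mul_nonneg hM0 (norm_nonneg z)]
    refine (hC (T z)).trans ?_
    rw [div_le_div_iff₀ h1 h2]
    nlinarith [mul_nonneg (mul_nonneg hC0 (sq_nonneg ‖T z‖)) (sq_nonneg ‖z‖),
      mul_nonneg hC0 (sq_nonneg ‖z‖), mul_nonneg (mul_nonneg hC0 (sq_nonneg ‖z‖)) (sq_nonneg M),
      mul_le_mul_of_nonneg_left h3 hC0,
      mul_nonneg (mul_nonneg (mul_nonneg hC0 (sq_nonneg ‖z‖)) (sq_nonneg M)) (sq_nonneg ‖T z‖)]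
  have main := hZtail (fun z => W' (T z)) (hW'c.comp hTc) hbound
  simp only [_root_.map_smul] at main
  rw [hEq] at main
  exact main
end
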